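/- arXiv:math/0512567 — 9 statements merged into one kernel-verified Lean document; each statement's English description precedes it below -/
import Mathlib

section
/- Let n ≥ 3 and let P_n' denote the commutative semigroup whose elements are the proper subsets of {1,…,n} with multiplication given by intersection (so the empty set is the zero element). If S is a commutative zero-divisor semigroup whose zero-divisor graph Γ(S) is isomorphic (as a simple graph) to Γ_n, then S is isomorphic as a semigroup to P_n'. -/
/-- A commutative semigroup with a (left- and right-) absorbing zero element. -/
class CommSemigroupWithZero (S : Type*) extends CommSemigroup S, MulZeroClass S

/-- A zero-divisor semigroup: every element is annihilated by some nonzero element. -/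
def IsZeroDivisorSemigroup (S : Type*) [CommSemigroupWithZero S] : Prop :=
  ∀ s : S, ∃ t : S, t ≠ 0 ∧ s * t = 0

/-- The zero-divisor graph Γ(S): vertices are the nonzero zero-divisors, distinct
vertices are adjacent iff their product is zero. -/
def zdGraph (S : Type*) [CommSemigroupWithZero S] :
    SimpleGraph {s : S // s ≠ 0 ∧ ∃ t : S, t ≠ 0 ∧ s * t = 0} where
  Adj x y := x ≠ y ∧ (x : S) * y = 0
  symm := ⟨by
    rintro x y ⟨h1, h2⟩
    exact ⟨h1.symm, by rwa [mul_comm]⟩⟩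
  loopless := ⟨fun x h => h.1 rfl⟩
/-- Vertices of Γₙ: nonempty proper subsets of {1,…,n}. -/
def GammaVert (n : ℕ) := {B : Finset (Fin n) // B.Nonempty ∧ B ≠ Finset.univ}

/-- The graph Γₙ: two distinct nonempty proper subsets adjacent iff disjoint. -/
def GammaGraph (n : ℕ) : SimpleGraph (GammaVert n) where
  Adj B C := B ≠ C ∧ Disjoint B.1 C.1
  symm := ⟨fun _ _ ⟨h1, h2⟩ => ⟨h1.symm, h2.symm⟩⟩
  loopless := ⟨fun _ h => h.1 rfl⟩

/-- The semigroup `Pₙ - {1}`: proper subsets of {1,…,n} under intersection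
(the empty set is the zero element). -/
def PropSubset (n : ℕ) := {B : Finset (Fin n) // B ≠ Finset.univ}

instance (n : ℕ) : Mul (PropSubset n) :=
  ⟨fun B C => ⟨B.1 ∩ C.1, by
    intro h
    have := Finset.inter_subset_left (s₁ := B.1) (s₂ := C.1)
    rw [h] at this
    exact B.2 (Finset.univ_subset_iff.mp this)⟩⟩

namespace GammaAux

open Finset

variable {n : ℕ} {S : Type*} [CommSemigroupWithZero S]

/-- A vertex of the zero-divisor graph from a nonzero element. -/
def vtx (hS : IsZeroDivisorSemigroup S) (s : S) (hs : s ≠ 0) :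
    {s : S // s ≠ 0 ∧ ∃ t : S, t ≠ 0 ∧ s * t = 0} := ⟨s, hs, hS s⟩

variable (hS : IsZeroDivisorSemigroup S) (φ : zdGraph S ≃g GammaGraph n)

/-- The subset of `Fin n` attached to an element of `S`. -/
noncomputable def A (s : S) : Finset (Fin n) :=
  @dite _ (s = 0) (Classical.dec _) (fun _ => ∅) (fun hs => (φ (vtx hS s hs)).1)

lemma A_zero : A hS φ (0 : S) = ∅ := dif_pos rfl

lemma A_eq (s : S) (hs : s ≠ 0) : A hS φ s = (φ (vtx hS s hs)).1 := dif_neg hs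

lemma A_nonempty (s : S) (hs : s ≠ 0) : (A hS φ s).Nonempty := by
  rw [A_eq hS φ s hs]; exact (φ (vtx hS s hs)).2.1

lemma A_ne_univ (s : S) (hs : s ≠ 0) : A hS φ s ≠ univ := by
  rw [A_eq hS φ s hs]; exact (φ (vtx hS s hs)).2.2

lemma A_inj {s t : S} (h : A hS φ s = A hS φ t) : s = t := by
  by_cases hs : s = 0 <;> by_cases ht : t = 0
  · rw [hs, ht]
  · exfalso
    rw [hs, A_zero] at h
    exact (A_nonempty hS φ t ht).ne_empty h.symm
  · exfalso
    rw [ht, A_zero] at h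
    exact (A_nonempty hS φ s hs).ne_empty h
  · rw [A_eq hS φ s hs, A_eq hS φ t ht] at h
    have : φ (vtx hS s hs) = φ (vtx hS t ht) := Subtype.ext h
    have := φ.toEquiv.injective this
    exact congrArg Subtype.val this

lemma mul_zero_iff (s t : S) (hs : s ≠ 0) (ht : t ≠ 0) (hne : s ≠ t) :
    s * t = 0 ↔ Disjoint (A hS φ s) (A hS φ t) := by
  have hv : vtx hS s hs ≠ vtx hS t ht := fun h => hne (congrArg Subtype.val h)
  have hφv : φ (vtx hS s hs) ≠ φ (vtx hS t ht) := fun h => hv (φ.toEquiv.injective h)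
  have hadj : (GammaGraph n).Adj (φ (vtx hS s hs)) (φ (vtx hS t ht)) ↔
      (zdGraph S).Adj (vtx hS s hs) (vtx hS t ht) := φ.map_adj_iff
  have h1 : (zdGraph S).Adj (vtx hS s hs) (vtx hS t ht) ↔ s * t = 0 := by
    constructor
    · exact fun h => (h : vtx hS s hs ≠ vtx hS t ht ∧ s * t = 0).2
    · exact fun h => (⟨hv, h⟩ : vtx hS s hs ≠ vtx hS t ht ∧ s * t = 0)
  have h2 : (GammaGraph n).Adj (φ (vtx hS s hs)) (φ (vtx hS t ht)) ↔
      Disjoint (A hS φ s) (A hS φ t) := by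
    rw [A_eq hS φ s hs, A_eq hS φ t ht]
    constructor
    · exact fun h => (h : φ (vtx hS s hs) ≠ φ (vtx hS t ht) ∧
        Disjoint (φ (vtx hS s hs)).1 (φ (vtx hS t ht)).1).2
    · exact fun h => (⟨hφv, h⟩ : φ (vtx hS s hs) ≠ φ (vtx hS t ht) ∧
        Disjoint (φ (vtx hS s hs)).1 (φ (vtx hS t ht)).1)
  rw [← h1, ← hadj, h2]

lemma exists_elem (B : Finset (Fin n)) (hB : B.Nonempty) (hBu : B ≠ univ) :
    ∃ s : S, ∃ hs : s ≠ 0, A hS φ s = B := by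
  refine ⟨(φ.symm ⟨B, hB, hBu⟩).1, (φ.symm ⟨B, hB, hBu⟩).2.1, ?_⟩
  rw [A_eq hS φ _ (φ.symm ⟨B, hB, hBu⟩).2.1]
  have hv : vtx hS (φ.symm ⟨B, hB, hBu⟩).1 (φ.symm ⟨B, hB, hBu⟩).2.1
      = φ.symm ⟨B, hB, hBu⟩ := Subtype.ext rfl
  rw [hv]; exact congrArg Subtype.val (φ.apply_symm_apply _)

section card

variable (hn : 3 ≤ n)

include hn in
lemma exists_not_mem_pair (a b : Fin n) : ∃ c : Fin n, c ≠ a ∧ c ≠ b := by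
  by_contra h
  push_neg at h
  have huniv : (univ : Finset (Fin n)) ⊆ {a, b} := by
    intro c _
    rcases em (c = a) with hc | hc
    · simp [hc]
    · simp [h c hc]
  have h2 : ({a, b} : Finset (Fin n)).card ≤ 2 := by
    refine le_trans (card_insert_le a {b}) ?_
    simp
  have h3 := card_le_card huniv
  rw [card_univ, Fintype.card_fin] at h3
  omega

include hn in
lemma sing_ne_univ (i : Fin n) : ({i} : Finset (Fin n)) ≠ univ := by
  intro h
  have := congrArg Finset.card h
  rw [card_singleton, card_univ, Fintype.card_fin] at this
  omega

include hn in
lemma pair_ne_univ (a b : Fin n) : ({a, b} : Finset (Fin n)) ≠ univ := by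
  intro h
  have hc := congrArg Finset.card h
  rw [card_univ, Fintype.card_fin] at hc
  have h2 : ({a, b} : Finset (Fin n)).card ≤ 2 := by
    refine le_trans (card_insert_le a {b}) ?_
    simp
  omega

include hn in
lemma compl_nonempty (j : Fin n) : (({j} : Finset (Fin n))ᶜ).Nonempty := by
  obtain ⟨c, hc, -⟩ := exists_not_mem_pair hn j j
  exact ⟨c, by simp [hc]⟩

lemma compl_ne_univ (j : Fin n) : (({j} : Finset (Fin n))ᶜ : Finset (Fin n)) ≠ univ := by
  intro h
  have : j ∈ (({j} : Finset (Fin n))ᶜ : Finset (Fin n)) := by rw [h]; exact mem_univ j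
  simp at this

lemma compl_card (j : Fin n) : (({j} : Finset (Fin n))ᶜ).card = n - 1 := by
  rw [card_compl, card_singleton, Fintype.card_fin]

/-- The element of `S` corresponding to the singleton `{i}`. -/
noncomputable def E (i : Fin n) : S :=
  let _ := hS
  (φ.symm ⟨{i}, Finset.singleton_nonempty i, sing_ne_univ hn i⟩).1

lemma E_ne_zero (i : Fin n) : E hS φ hn i ≠ 0 :=
  (φ.symm ⟨{i}, Finset.singleton_nonempty i, sing_ne_univ hn i⟩).2.1

lemma A_E (i : Fin n) : A hS φ (E hS φ hn i) = {i} := by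
  rw [A_eq hS φ _ (E_ne_zero hS φ hn i)]
  have hv : vtx hS (E hS φ hn i) (E_ne_zero hS φ hn i)
      = φ.symm ⟨{i}, Finset.singleton_nonempty i, sing_ne_univ hn i⟩ := Subtype.ext rfl
  rw [hv]; exact congrArg Subtype.val (φ.apply_symm_apply _)

lemma E_ne_E {i j : Fin n} (hij : i ≠ j) : E hS φ hn i ≠ E hS φ hn j := by
  intro h
  have := congrArg (A hS φ) h
  rw [A_E, A_E] at this
  exact hij (by simpa using this)

lemma E_mul_E {i j : Fin n} (hij : i ≠ j) : E hS φ hn i * E hS φ hn j = 0 := by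
  rw [mul_zero_iff hS φ _ _ (E_ne_zero hS φ hn i) (E_ne_zero hS φ hn j) (E_ne_E hS φ hn hij),
      A_E, A_E]
  exact Finset.disjoint_singleton.mpr hij

lemma mul_E_zero {s : S} (hs : s ≠ 0) {i : Fin n} (hi : i ∉ A hS φ s) :
    s * E hS φ hn i = 0 := by
  have hne : s ≠ E hS φ hn i := by
    intro h
    rw [h, A_E] at hi
    simp at hi
  rw [mul_zero_iff hS φ _ _ hs (E_ne_zero hS φ hn i) hne, A_E]
  simpa using hi

lemma eq_E {s : S} (hs : s ≠ 0) {i : Fin n} (h0 : s * E hS φ hn i = 0)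
    (hi : i ∈ A hS φ s) : s = E hS φ hn i := by
  by_contra hne
  have := (mul_zero_iff hS φ _ _ hs (E_ne_zero hS φ hn i) hne).mp h0
  rw [A_E] at this
  rw [Finset.disjoint_singleton_right] at this
  exact this hi

/-- If `u` kills all singletons except possibly `j` and doesn't kill `E j`, then `u = E j`. -/
lemma eq_E_of_forall {u : S} (hu : u ≠ 0) {j : Fin n}
    (hall : ∀ m, m ≠ j → u * E hS φ hn m = 0) (hj : u * E hS φ hn j ≠ 0) :
    u = E hS φ hn j := by
  have hmem : ∀ m ∈ A hS φ u, m = j := by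
    intro m hm
    by_contra hmj
    have hue : u = E hS φ hn m := eq_E hS φ hn hu (hall m hmj) hm
    rw [hue] at hj
    exact hj (E_mul_E hS φ hn hmj)
  have hsub : A hS φ u ⊆ {j} := fun m hm => by simp [hmem m hm]
  have : A hS φ u = {j} := by
    obtain ⟨m, hm⟩ := A_nonempty hS φ u hu
    rcases Finset.subset_singleton_iff.mp hsub with h | h
    · exact absurd h (A_nonempty hS φ u hu).ne_empty
    · exact h
  exact A_inj hS φ (by rw [this, A_E])

/-- Main pinning lemma: if `v = s * E j` is a nonzero element killed by all singletons,
then `v = E j`. -/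
lemma eq_Ej_of_kill {j : Fin n} {s v : S} (hs : s ≠ 0)
    (hvdef : v = s * E hS φ hn j) (hv0 : v ≠ 0)
    (hall : ∀ q : Fin n, v * E hS φ hn q = 0) : v = E hS φ hn j := by
  -- v must be some singleton E q
  obtain ⟨q, hq⟩ := A_nonempty hS φ v hv0
  have hvq : v = E hS φ hn q := eq_E hS φ hn hv0 (hall q) hq
  -- pin q = j using the complement of {j}
  obtain ⟨c, hc0, hcA⟩ := exists_elem hS φ (({j} : Finset (Fin n))ᶜ)
    (compl_nonempty hn j) (compl_ne_univ j)
  have hEjc : E hS φ hn j * c = 0 := by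
    have hne : E hS φ hn j ≠ c := by
      intro h
      have := congrArg (A hS φ) h
      rw [A_E, hcA] at this
      have : j ∈ (({j} : Finset (Fin n))ᶜ : Finset (Fin n)) := by
        rw [← this]; simp
      simp at this
    rw [mul_zero_iff hS φ _ _ (E_ne_zero hS φ hn j) hc0 hne, A_E, hcA]
    simp
  have hvc : v * c = 0 := by
    rw [hvdef, mul_assoc, hEjc, mul_zero]
  have hEqc : E hS φ hn q * c = 0 := by rw [← hvq]; exact hvc
  have hq_eq_j : q = j := by
    have hne : E hS φ hn q ≠ c := by
      intro h
      have := congrArg (A hS φ) h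
      rw [A_E, hcA] at this
      have hcard := congrArg Finset.card this
      rw [card_singleton, compl_card] at hcard
      omega
    have := (mul_zero_iff hS φ _ _ (E_ne_zero hS φ hn q) hc0 hne).mp hEqc
    rw [A_E, hcA, Finset.disjoint_singleton_left] at this
    simpa using this
  rw [hvq, hq_eq_j]

/-- Step A: if `E j ^ 2 = 0` then every element containing `j` absorbs `E j` to `E j`. -/
lemma stepA {j : Fin n} (hjj : E hS φ hn j * E hS φ hn j = 0)
    {s : S} (hs : s ≠ 0) (hjs : j ∈ A hS φ s) (hsej : s ≠ E hS φ hn j) :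
    s * E hS φ hn j = E hS φ hn j := by
  set u := s * E hS φ hn j with hu_def
  have hu0 : u ≠ 0 := by
    intro h
    have := (mul_zero_iff hS φ _ _ hs (E_ne_zero hS φ hn j) hsej).mp h
    rw [A_E, Finset.disjoint_singleton_right] at this
    exact this hjs
  have hall : ∀ q : Fin n, u * E hS φ hn q = 0 := by
    intro q
    rcases em (q = j) with hq | hq
    · rw [hq, hu_def, mul_assoc, hjj, mul_zero]
    · rw [hu_def, mul_assoc, E_mul_E hS φ hn (fun h => hq h.symm), mul_zero]
  have := eq_Ej_of_kill hS φ hn hs hu_def.symm.symm hu0 hall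
  exact this

/-- The key lemma: each singleton element is idempotent. -/
lemma E_sq (j : Fin n) : E hS φ hn j * E hS φ hn j = E hS φ hn j := by
  set w := E hS φ hn j * E hS φ hn j with hw_def
  have hwm : ∀ m, m ≠ j → w * E hS φ hn m = 0 := by
    intro m hm
    rw [hw_def, mul_assoc, E_mul_E hS φ hn (fun h => hm h.symm), mul_zero]
  rcases em (w = 0) with hw0 | hw0
  · -- case E j ^ 2 = 0 : derive a contradiction
    exfalso
    obtain ⟨p, hpj, -⟩ := exists_not_mem_pair hn j j
    obtain ⟨r, hrj, hrp⟩ := exists_not_mem_pair hn j p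
    obtain ⟨s, hs0, hsA⟩ := exists_elem hS φ ({j, p} : Finset (Fin n))
      ⟨j, by simp⟩ (pair_ne_univ hn j p)
    obtain ⟨t, ht0, htA⟩ := exists_elem hS φ ({j, r} : Finset (Fin n))
      ⟨j, by simp⟩ (pair_ne_univ hn j r)
    have hsej : s ≠ E hS φ hn j := by
      intro h
      have := congrArg (A hS φ) h
      rw [hsA, A_E] at this
      have : p ∈ ({j} : Finset (Fin n)) := by rw [← this]; simp
      simp at this
      exact hpj this
    have htej : t ≠ E hS φ hn j := by
      intro h
      have := congrArg (A hS φ) h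
      rw [htA, A_E] at this
      have : r ∈ ({j} : Finset (Fin n)) := by rw [← this]; simp
      simp at this
      exact hrj this
    have hsj : s * E hS φ hn j = E hS φ hn j :=
      stepA hS φ hn hw0 hs0 (by rw [hsA]; simp) hsej
    have htj : t * E hS φ hn j = E hS φ hn j :=
      stepA hS φ hn hw0 ht0 (by rw [htA]; simp) htej
    set z := s * t with hz_def
    have hzj : z * E hS φ hn j = E hS φ hn j := by
      rw [hz_def, mul_assoc, htj, hsj]
    have hz0 : z ≠ 0 := by
      intro h
      rw [h, zero_mul] at hzj
      exact E_ne_zero hS φ hn j hzj.symm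
    have hzej : z ≠ E hS φ hn j := by
      intro h
      rw [h, hw_def.symm, hw0] at hzj
      exact E_ne_zero hS φ hn j hzj.symm
    have hallm : ∀ m, m ≠ j → z * E hS φ hn m = 0 := by
      intro m hm
      rcases em (m = p) with hmp | hmp
      · -- use t : m ∉ {j, r}
        have htm : t * E hS φ hn m = 0 := by
          refine mul_E_zero hS φ hn ht0 ?_
          rw [htA]
          simp only [mem_insert, mem_singleton]
          push_neg
          exact ⟨hm, by rw [hmp]; exact fun h => hrp h.symm⟩
        rw [hz_def, mul_assoc, htm, mul_zero]
      · -- use s : m ∉ {j, p}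
        have hsm : s * E hS φ hn m = 0 := by
          refine mul_E_zero hS φ hn hs0 ?_
          rw [hsA]
          simp only [mem_insert, mem_singleton]
          push_neg
          exact ⟨hm, hmp⟩
        rw [hz_def, mul_comm s t, mul_assoc, hsm, mul_zero]
    have := eq_E_of_forall hS φ hn hz0 hallm (by rw [hzj]; exact E_ne_zero hS φ hn j)
    exact hzej this
  · -- case w ≠ 0
    rcases em (∀ m ∈ A hS φ w, m = j) with hAw | hAw
    · -- then A w = {j}, so w = E j
      have hsub : A hS φ w ⊆ {j} := fun m hm => by simp [hAw m hm]
      have hAwj : A hS φ w = {j} := by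
        rcases Finset.subset_singleton_iff.mp hsub with h | h
        · exact absurd h (A_nonempty hS φ w hw0).ne_empty
        · exact h
      exact A_inj hS φ (by rw [hAwj, A_E])
    · -- otherwise w = E m for some m ≠ j, contradiction
      exfalso
      push_neg at hAw
      obtain ⟨m, hm, hmj⟩ := hAw
      have hwm' : w = E hS φ hn m := eq_E hS φ hn hw0 (hwm m hmj) hm
      obtain ⟨p, hpj, hpm⟩ := exists_not_mem_pair hn j m
      obtain ⟨s, hs0, hsA⟩ := exists_elem hS φ ({j, p} : Finset (Fin n))
        ⟨j, by simp⟩ (pair_ne_univ hn j p)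
      have hsej : s ≠ E hS φ hn j := by
        intro h
        have := congrArg (A hS φ) h
        rw [hsA, A_E] at this
        have : p ∈ ({j} : Finset (Fin n)) := by rw [← this]; simp
        simp at this
        exact hpj this
      set v := s * E hS φ hn j with hv_def
      have hv0 : v ≠ 0 := by
        intro h
        have := (mul_zero_iff hS φ _ _ hs0 (E_ne_zero hS φ hn j) hsej).mp h
        rw [hsA, A_E, Finset.disjoint_singleton_right] at this
        simp at this
      have hall : ∀ q : Fin n, v * E hS φ hn q = 0 := by
        intro q
        rcases em (q = j) with hq | hq
        · -- v * E j = s * w = s * E m = 0 since m ∉ {j, p}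
          have hsm : s * E hS φ hn m = 0 := by
            refine mul_E_zero hS φ hn hs0 ?_
            rw [hsA]
            simp only [mem_insert, mem_singleton]
            push_neg
            exact ⟨hmj, fun h => hpm h.symm⟩
          rw [hq, hv_def, mul_assoc, ← hw_def, hwm', hsm]
        · rw [hv_def, mul_assoc, E_mul_E hS φ hn (fun h => hq h.symm), mul_zero]
      have hvej : v = E hS φ hn j := eq_Ej_of_kill hS φ hn hs0 hv_def hv0 hall
      have : v * E hS φ hn j = 0 := hall j
      rw [hvej, ← hw_def] at this
      exact hw0 this

/-- Absorption: if `i ∈ A s` then `s * E i = E i`. -/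
lemma mul_E {s : S} (hs : s ≠ 0) {i : Fin n} (hi : i ∈ A hS φ s) :
    s * E hS φ hn i = E hS φ hn i := by
  rcases em (s = E hS φ hn i) with hse | hse
  · rw [hse]; exact E_sq hS φ hn i
  · set u := s * E hS φ hn i with hu_def
    have hu0 : u ≠ 0 := by
      intro h
      have := (mul_zero_iff hS φ _ _ hs (E_ne_zero hS φ hn i) hse).mp h
      rw [A_E, Finset.disjoint_singleton_right] at this
      exact this hi
    have hallm : ∀ m, m ≠ i → u * E hS φ hn m = 0 := by
      intro m hm
      rw [hu_def, mul_assoc, E_mul_E hS φ hn (fun h => hm h.symm), mul_zero]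
    have hui : u * E hS φ hn i ≠ 0 := by
      rw [hu_def, mul_assoc, E_sq hS φ hn i, ← hu_def]
      exact hu0
    exact eq_E_of_forall hS φ hn hu0 hallm hui

include hn in
/-- The fundamental multiplicativity: `A (x * y) = A x ∩ A y`. -/
lemma A_mul (x y : S) : A hS φ (x * y) = A hS φ x ∩ A hS φ y := by
  rcases em (x = 0) with hx | hx
  · rw [hx, zero_mul, A_zero, empty_inter]
  rcases em (y = 0) with hy | hy
  · rw [hy, mul_zero, A_zero, inter_empty]
  rcases Finset.eq_empty_or_nonempty (A hS φ x ∩ A hS φ y) with hd | hd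
  · -- disjoint supports: x * y = 0
    have hxy : x ≠ y := by
      intro h
      rw [h, inter_self] at hd
      exact (A_nonempty hS φ y hy).ne_empty hd
    have : x * y = 0 := by
      rw [mul_zero_iff hS φ _ _ hx hy hxy]
      exact Finset.disjoint_iff_inter_eq_empty.mpr hd
    rw [this, A_zero, hd]
  · obtain ⟨i, hi⟩ := hd
    rw [Finset.mem_inter] at hi
    set z := x * y with hz_def
    have hzi : z * E hS φ hn i = E hS φ hn i := by
      rw [hz_def, mul_assoc, mul_E hS φ hn hy hi.2, mul_E hS φ hn hx hi.1]
    have hz0 : z ≠ 0 := by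
      intro h
      rw [h, zero_mul] at hzi
      exact E_ne_zero hS φ hn i hzi.symm
    ext m
    rw [Finset.mem_inter]
    constructor
    · intro hm
      constructor
      · by_contra hmx
        have hxm : x * E hS φ hn m = 0 := mul_E_zero hS φ hn hx hmx
        have hzm : z * E hS φ hn m = 0 := by
          rw [hz_def, mul_comm x y, mul_assoc, hxm, mul_zero]
        have hze : z = E hS φ hn m := eq_E hS φ hn hz0 hzm hm
        rw [hze, E_sq hS φ hn m] at hzm
        exact E_ne_zero hS φ hn m hzm
      · by_contra hmy
        have hym : y * E hS φ hn m = 0 := mul_E_zero hS φ hn hy hmy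
        have hzm : z * E hS φ hn m = 0 := by
          rw [hz_def, mul_assoc, hym, mul_zero]
        have hze : z = E hS φ hn m := eq_E hS φ hn hz0 hzm hm
        rw [hze, E_sq hS φ hn m] at hzm
        exact E_ne_zero hS φ hn m hzm
    · rintro ⟨hmx, hmy⟩
      by_contra hmz
      have hzm : z * E hS φ hn m = 0 := mul_E_zero hS φ hn hz0 hmz
      have hzm' : z * E hS φ hn m = E hS φ hn m := by
        rw [hz_def, mul_assoc, mul_E hS φ hn hy hmy, mul_E hS φ hn hx hmx]
      rw [hzm] at hzm'
      exact E_ne_zero hS φ hn m hzm'.symm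

include hn in
lemma A_ne_univ' (s : S) : A hS φ s ≠ univ := by
  rcases em (s = 0) with hs | hs
  · rw [hs, A_zero]
    intro h
    haveI : Nonempty (Fin n) := ⟨⟨0, by omega⟩⟩
    exact (Finset.univ_nonempty (α := Fin n)).ne_empty h.symm
  · exact A_ne_univ hS φ s hs

/-- The semigroup isomorphism. -/
noncomputable def theIso : S ≃* PropSubset n := by
  have hF : Function.Bijective (fun s : S => (⟨A hS φ s, A_ne_univ' hS φ hn s⟩ : PropSubset n)) := by
    constructor
    · intro s t h
      exact A_inj hS φ (congrArg Subtype.val h)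
    · rintro ⟨B, hB⟩
      rcases Finset.eq_empty_or_nonempty B with hBe | hBne
      · exact ⟨0, Subtype.ext (by show A hS φ 0 = B; rw [A_zero, hBe])⟩
      · obtain ⟨s, hs, hsA⟩ := exists_elem hS φ B hBne hB
        exact ⟨s, Subtype.ext hsA⟩
  exact
    { Equiv.ofBijective _ hF with
      map_mul' := fun x y => Subtype.ext (A_mul hS φ hn x y) }

end card

end GammaAux

/-- **Theorem 2.2.** For n ≥ 3, any commutative zero-divisor semigroup whose
zero-divisor graph is isomorphic to Γₙ is isomorphic, as a semigroup, to the
semigroup of proper subsets of {1,…,n} under intersection. -/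
theorem gamma_n_determines_semigroup (n : ℕ) (hn : 3 ≤ n)
    (S : Type*) [CommSemigroupWithZero S] (hS : IsZeroDivisorSemigroup S)
    (h : Nonempty (zdGraph S ≃g GammaGraph n)) :
    Nonempty (S ≃* PropSubset n) := by
  obtain ⟨φ⟩ := h
  exact ⟨GammaAux.theIso hS φ hn⟩
end

section
/- For every n ≥ 2, the number of edges of the graph Γ_n equals (∑_{i=1}^{n−1} C(n,i)·2^{n−1−i}) − 2^{n−1} + 1, where C(n,i) is the binomial coefficient. -/
open Finset

instance (n : ℕ) : Fintype (GammaVert n) := by unfold GammaVert; infer_instance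
instance (n : ℕ) : DecidableEq (GammaVert n) := by unfold GammaVert; infer_instance
instance (n : ℕ) : DecidableRel (GammaGraph n).Adj := fun B C =>
  show Decidable (B ≠ C ∧ Disjoint B.1 C.1) from inferInstance

lemma gamma_degree (n : ℕ) (B : GammaVert n) :
    (GammaGraph n).degree B = 2 ^ (n - B.1.card) - 1 := by
  have key : ((GammaGraph n).neighborFinset B).card = ((B.1ᶜ.powerset).erase ∅).card := by
    apply Finset.card_bij (fun C _ => C.1)
    · intro C hC
      rw [SimpleGraph.mem_neighborFinset] at hC
      obtain ⟨hne, hdisj⟩ : B ≠ C ∧ Disjoint B.1 C.1 := hC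
      rw [Finset.mem_erase, Finset.mem_powerset]
      exact ⟨Finset.nonempty_iff_ne_empty.1 C.2.1,
        le_compl_iff_disjoint_left.2 hdisj⟩
    · intro C _ D _ h
      exact Subtype.ext h
    · intro S hS
      rw [Finset.mem_erase, Finset.mem_powerset] at hS
      have hdisj : Disjoint B.1 S := le_compl_iff_disjoint_left.1 hS.2
      have hSne : S.Nonempty := Finset.nonempty_iff_ne_empty.2 hS.1
      have hSuniv : S ≠ Finset.univ := fun h => by
        subst h
        have h2 : B.1 = ⊥ := disjoint_top.1 (by simpa [Finset.top_eq_univ] using hdisj)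
        exact Finset.nonempty_iff_ne_empty.1 B.2.1 (by simpa [Finset.bot_eq_empty] using h2)
      refine ⟨(⟨S, hSne, hSuniv⟩ : GammaVert n), ?_, rfl⟩
      apply (SimpleGraph.mem_neighborFinset _ _ _).2
      show B ≠ _ ∧ Disjoint B.1 S
      refine ⟨fun h => ?_, hdisj⟩
      have hBS : B.1 = S := congrArg Subtype.val h
      rw [hBS, disjoint_self] at hdisj
      exact hS.1 (by simpa [Finset.bot_eq_empty] using hdisj)
  show ((GammaGraph n).neighborFinset B).card = _
  rw [key, Finset.card_erase_of_mem (Finset.empty_mem_powerset _),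
    Finset.card_powerset, Finset.card_compl, Fintype.card_fin]

/-- The number of edges of Γₙ is (∑_{i=1}^{n−1} C(n,i)·2^{n−1−i}) − 2^{n−1} + 1. -/
theorem gammaGraph_card_edges (n : ℕ) (hn : 2 ≤ n) :
    Nat.card (GammaGraph n).edgeSet =
      (∑ i ∈ Finset.Icc 1 (n - 1), n.choose i * 2 ^ (n - 1 - i)) - 2 ^ (n - 1) + 1 := by
  classical
  have hcard : Nat.card (GammaGraph n).edgeSet = ((GammaGraph n).edgeFinset).card := by
    rw [Nat.card_eq_fintype_card, ← Set.toFinset_card]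
    congr 1
  have hdc : ∑ B : GammaVert n, (GammaGraph n).degree B
      = 2 * ((GammaGraph n).edgeFinset).card :=
    SimpleGraph.sum_degrees_eq_twice_card_edges _
  -- rewrite sum of degrees
  have hsub : ∑ B : GammaVert n, (GammaGraph n).degree B
      = ∑ S ∈ Finset.univ.filter (fun S : Finset (Fin n) => S.Nonempty ∧ S ≠ Finset.univ),
          (2 ^ (n - S.card) - 1) := by
    rw [Finset.sum_congr rfl (fun B (_ : B ∈ Finset.univ) => gamma_degree n B)]
    exact (Finset.sum_subtype (p := fun S : Finset (Fin n) => S.Nonempty ∧ S ≠ Finset.univ)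
      _ (fun S => by simp) (fun S => 2 ^ (n - S.card) - 1)).symm
  have hfil : Finset.univ.filter (fun S : Finset (Fin n) => S.Nonempty ∧ S ≠ Finset.univ)
      = (Finset.Icc 1 (n-1)).biUnion (fun i => Finset.powersetCard i Finset.univ) := by
    ext S
    simp only [Finset.mem_filter, Finset.mem_univ, true_and, Finset.mem_biUnion,
      Finset.mem_Icc, Finset.mem_powersetCard, Finset.subset_univ, true_and]
    constructor
    · rintro ⟨h1, h2⟩
      refine ⟨S.card, ⟨Finset.card_pos.2 h1, ?_⟩, rfl⟩
      have := S.card_lt_iff_ne_univ.2 h2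
      rw [Fintype.card_fin] at this
      omega
    · rintro ⟨i, ⟨hi1, hi2⟩, rfl⟩
      refine ⟨Finset.card_pos.1 hi1, ?_⟩
      apply S.card_lt_iff_ne_univ.1
      rw [Fintype.card_fin]
      omega
  have hbi : ∑ S ∈ (Finset.Icc 1 (n-1)).biUnion
        (fun i => Finset.powersetCard i (Finset.univ : Finset (Fin n))),
      (2 ^ (n - S.card) - 1)
      = ∑ i ∈ Finset.Icc 1 (n-1), n.choose i * (2 ^ (n - i) - 1) := by
    rw [Finset.sum_biUnion (Finset.univ.pairwise_disjoint_powersetCard.set_pairwise _)]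
    refine Finset.sum_congr rfl (fun i _ => ?_)
    rw [Finset.sum_congr rfl (fun S hS => by
      rw [(Finset.mem_powersetCard.1 hS).2]), Finset.sum_const,
      Finset.card_powersetCard, Finset.card_univ, Fintype.card_fin, smul_eq_mul]
  -- arithmetic
  set A := ∑ i ∈ Finset.Icc 1 (n-1), n.choose i * 2 ^ (n - 1 - i) with hA
  set E := ((GammaGraph n).edgeFinset).card with hE
  have hsplit : ∑ i ∈ Finset.Icc 1 (n-1), n.choose i * (2 ^ (n - i) - 1)
      = (∑ i ∈ Finset.Icc 1 (n-1), n.choose i * 2 ^ (n - i))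
        - ∑ i ∈ Finset.Icc 1 (n-1), n.choose i := by
    rw [← Finset.sum_tsub_distrib _
      (fun i _ => Nat.le_mul_of_pos_right _ (Nat.pow_pos (by norm_num)))]
    refine Finset.sum_congr rfl fun i _ => ?_
    rw [Nat.mul_sub, mul_one]
  have hdouble : ∑ i ∈ Finset.Icc 1 (n-1), n.choose i * 2 ^ (n - i) = 2 * A := by
    rw [hA, Finset.mul_sum]
    refine Finset.sum_congr rfl (fun i hi => ?_)
    rw [Finset.mem_Icc] at hi
    have h : n - i = (n - 1 - i) + 1 := by omega
    rw [h, pow_succ]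
    ring
  have hchoose : (∑ i ∈ Finset.Icc 1 (n-1), n.choose i) + 2 = 2 ^ n := by
    have h := Nat.sum_range_choose n
    rw [Finset.range_eq_Ico,
      ← Finset.sum_Ico_consecutive _ (Nat.zero_le 1) (by omega : 1 ≤ n + 1),
      ← Finset.sum_Ico_consecutive _ (by omega : (1:ℕ) ≤ n) (by omega : n ≤ n + 1),
      Nat.Ico_succ_singleton, Nat.Ico_succ_singleton] at h
    have hIccIco : Finset.Icc 1 (n-1) = Finset.Ico 1 n := by
      rw [← Finset.Ico_add_one_right_eq_Icc]
      congr 1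
      omega
    rw [Finset.sum_singleton, Finset.sum_singleton, Nat.choose_zero_right,
      Nat.choose_self] at h
    rw [hIccIco]
    omega
  have hAge : (∑ i ∈ Finset.Icc 1 (n-1), n.choose i) ≤ A := by
    rw [hA]
    exact Finset.sum_le_sum
      (fun i _ => Nat.le_mul_of_pos_right _ (Nat.pow_pos (by norm_num)))
  have hpow : 2 ^ n = 2 * 2 ^ (n - 1) := by
    rw [← pow_succ']
    congr 1
    omega
  have hp2 : 2 ≤ 2 ^ (n - 1) := by
    calc 2 = 2 ^ 1 := rfl
    _ ≤ 2 ^ (n - 1) := Nat.pow_le_pow_right (by norm_num) (by omega)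
  have key : 2 * E = 2 * A - ((∑ i ∈ Finset.Icc 1 (n-1), n.choose i)) := by
    rw [← hdc, hsub, hfil, hbi, hsplit, hdouble]
  rw [hcard]
  omega
end

section
/- For every n ≥ 3, the diameter of the graph Γ_n (the maximum over all pairs of vertices of the length of a shortest path joining them) equals 3. -/
lemma gamma_adj {n : ℕ} {u v : GammaVert n} (h : Disjoint u.1 v.1) :
    (GammaGraph n).Adj u v := by
  refine ⟨fun he => ?_, h⟩
  subst he
  exact u.2.1.ne_empty (by simpa using disjoint_self.mp h)

lemma singleton_ne_univ {n : ℕ} (hn : 2 ≤ n) (x : Fin n) :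
    ({x} : Finset (Fin n)) ≠ Finset.univ := by
  intro h
  have := congrArg Finset.card h
  simp [Finset.card_univ] at this
  omega

lemma exists_not_mem_of_ne_univ {n : ℕ} {s : Finset (Fin n)} (h : s ≠ Finset.univ) :
    ∃ x, x ∉ s := by
  by_contra hc
  push_neg at hc
  exact h (Finset.eq_univ_iff_forall.mpr hc)

lemma gamma_edist_le {n : ℕ} (hn : 3 ≤ n) (u v : GammaVert n) :
    (GammaGraph n).edist u v ≤ 3 := by
  rcases eq_or_ne u v with rfl | huv
  · simp [SimpleGraph.edist_self]
  by_cases hd : Disjoint u.1 v.1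
  · exact le_trans (le_of_eq (SimpleGraph.edist_eq_one_iff_adj.mpr (gamma_adj hd)))
      (by norm_num)
  -- not disjoint; find x ∉ u.1, y ∉ v.1 with x ≠ y
  have hne : u.1 ≠ v.1 := fun h => huv (Subtype.ext h)
  have key : ∃ x y : Fin n, x ∉ u.1 ∧ y ∉ v.1 ∧ x ≠ y := by
    by_cases hA : ∃ x, x ∉ u.1 ∧ x ∈ v.1
    · obtain ⟨x, hxu, hxv⟩ := hA
      obtain ⟨y, hy⟩ := exists_not_mem_of_ne_univ v.2.2
      exact ⟨x, y, hxu, hy, fun h => hy (h ▸ hxv)⟩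
    · push_neg at hA
      have hvu : v.1 ⊆ u.1 := fun z hz => by
        by_contra h
        exact hA z h hz
      obtain ⟨y, hyu, hyv⟩ := Finset.exists_of_ssubset (hvu.ssubset_of_ne hne.symm)
      obtain ⟨x, hx⟩ := exists_not_mem_of_ne_univ u.2.2
      exact ⟨x, y, hx, hyv, fun h => hx (h ▸ hyu)⟩
  obtain ⟨x, y, hx, hy, hxy⟩ := key
  let a : GammaVert n := ⟨{x}, Finset.singleton_nonempty x, singleton_ne_univ (by omega) x⟩
  let b : GammaVert n := ⟨{y}, Finset.singleton_nonempty y, singleton_ne_univ (by omega) y⟩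
  have h1 : (GammaGraph n).Adj u a := gamma_adj (by simp [a, hx])
  have h2 : (GammaGraph n).Adj a b := gamma_adj (by simp [a, b, Ne.symm hxy, hxy])
  have h3 : (GammaGraph n).Adj b v := gamma_adj (by simp [b, hy])
  have := SimpleGraph.edist_le
    (SimpleGraph.Walk.cons h1 (SimpleGraph.Walk.cons h2 (SimpleGraph.Walk.cons h3 SimpleGraph.Walk.nil)))
  simpa using this

lemma gamma_lower {n : ℕ} (hn : 3 ≤ n) :
    ∃ u v : GammaVert n, 3 ≤ (GammaGraph n).edist u v := by
  set e0 : Fin n := ⟨0, by omega⟩ with he0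
  set e1 : Fin n := ⟨1, by omega⟩ with he1
  set e2 : Fin n := ⟨2, by omega⟩ with he2
  have h01 : e0 ≠ e1 := by simp [he0, he1, Fin.ext_iff]
  have h20 : e2 ≠ e0 := by simp [he0, he2, Fin.ext_iff]
  have h21 : e2 ≠ e1 := by simp [he1, he2, Fin.ext_iff]
  have hne_univ : ∀ x : Fin n, Finset.univ \ {x} ≠ Finset.univ := by
    intro x h
    have hx := Finset.mem_univ x
    rw [← h] at hx
    simp at hx
  refine ⟨⟨Finset.univ \ {e0}, ⟨e1, by simp [Ne.symm h01]⟩, hne_univ e0⟩,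
          ⟨Finset.univ \ {e1}, ⟨e0, by simp [h01]⟩, hne_univ e1⟩, ?_⟩
  set u : GammaVert n := ⟨Finset.univ \ {e0}, ⟨e1, by simp [Ne.symm h01]⟩, hne_univ e0⟩
  set v : GammaVert n := ⟨Finset.univ \ {e1}, ⟨e0, by simp [h01]⟩, hne_univ e1⟩
  by_contra hlt
  push_neg at hlt
  have hne_top : (GammaGraph n).edist u v ≠ ⊤ := fun h => by simp [h] at hlt
  obtain ⟨p, hp⟩ := SimpleGraph.exists_walk_of_edist_ne_top hne_top
  have hplen : p.length < 3 := by
    have := hp ▸ hlt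
    exact_mod_cast this
  have huv : u ≠ v := by
    intro h
    have : (Finset.univ \ {e0} : Finset (Fin n)) = Finset.univ \ {e1} := congrArg Subtype.val h
    have h0 : e0 ∈ (Finset.univ \ {e1} : Finset (Fin n)) := by simp [h01]
    rw [← this] at h0
    simp at h0
  have hnadj : ¬ (GammaGraph n).Adj u v := by
    rintro ⟨-, hd⟩
    have h2u : e2 ∈ u.1 := by simp [u, h20]
    have h2v : e2 ∈ v.1 := by simp [v, h21]
    exact Finset.disjoint_left.mp hd h2u h2v
  interval_cases hl : p.length
  · exact huv (SimpleGraph.Walk.eq_of_length_eq_zero hl)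
  · have : (GammaGraph n).Adj u v := by
      have h0 := p.adj_getVert_succ (by omega : 0 < p.length)
      rw [SimpleGraph.Walk.getVert_zero] at h0
      have h1 : p.getVert 1 = v := by
        have := p.getVert_length
        rw [hl] at this
        exact this
      rwa [h1] at h0
    exact hnadj this
  · set m := p.getVert 1 with hm
    have h0 : (GammaGraph n).Adj u m := by
      have := p.adj_getVert_succ (by omega : 0 < p.length)
      rwa [SimpleGraph.Walk.getVert_zero] at this
    have h1 : (GammaGraph n).Adj m v := by
      have := p.adj_getVert_succ (by omega : 1 < p.length)
      have hend : p.getVert 2 = v := by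
        have := p.getVert_length
        rw [hl] at this
        exact this
      rwa [hend] at this
    obtain ⟨z, hz⟩ := m.2.1
    have hzu : z ∉ u.1 := Finset.disjoint_left.mp h0.2.symm hz
    have hzv : z ∉ v.1 := Finset.disjoint_left.mp h1.2 hz
    have hz0 : z = e0 := by
      by_contra h
      exact hzu (by simp [u, h])
    have hz1 : z = e1 := by
      by_contra h
      exact hzv (by simp [v, h])
    exact h01 (hz0 ▸ hz1 ▸ rfl)

/-- For n ≥ 3, the diameter of Γₙ is 3. -/
theorem gammaGraph_diam (n : ℕ) (hn : 3 ≤ n) :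
    (GammaGraph n).diam = 3 := by
  obtain ⟨u, v, hlow⟩ := gamma_lower hn
  have h3 : (GammaGraph n).ediam = 3 :=
    le_antisymm (SimpleGraph.ediam_le_of_edist_le (gamma_edist_le hn))
      (le_trans hlow SimpleGraph.edist_le_ediam)
  rw [SimpleGraph.diam, h3]
  rfl
end

section
/- For every n ≥ 3, the graph Γ_n has exactly n end vertices (vertices of degree 1), namely the subsets of {1,…,n} of cardinality n − 1. -/
lemma gamma_card_lt (n : ℕ) (B : GammaVert n) : B.1.card < n := by
  have h := Finset.card_lt_card (lt_of_le_of_ne (Finset.subset_univ B.1) B.2.2)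
  simpa using h

lemma gamma_iff (n : ℕ) (hn : 3 ≤ n) (B : GammaVert n) :
    Nat.card ((GammaGraph n).neighborSet B) = 1 ↔ B.1.card = n - 1 := by
  have hBlt : B.1.card < n := gamma_card_lt n B
  have hBpos : 0 < B.1.card := Finset.card_pos.mpr B.2.1
  constructor
  · intro h
    by_contra hne
    have h2 : 2 ≤ B.1ᶜ.card := by
      rw [Finset.card_compl, Fintype.card_fin]
      omega
    obtain ⟨x, hx, y, hy, hxy⟩ := Finset.one_lt_card.mp h2
    have hx' : x ∉ B.1 := by simpa using hx
    have hy' : y ∉ B.1 := by simpa using hy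
    have hsing : ∀ z : Fin n, ({z} : Finset (Fin n)) ≠ Finset.univ := by
      intro z hz
      have := congrArg Finset.card hz
      simp [Finset.card_univ] at this
      omega
    let C1 : GammaVert n := ⟨{x}, Finset.singleton_nonempty x, hsing x⟩
    let C2 : GammaVert n := ⟨{y}, Finset.singleton_nonempty y, hsing y⟩
    have hC1 : C1 ∈ (GammaGraph n).neighborSet B := by
      refine ⟨?_, by simpa [C1, Finset.disjoint_singleton_right] using hx'⟩
      intro hEq
      have : B.1 = {x} := congrArg Subtype.val hEq
      exact hx' (this ▸ Finset.mem_singleton_self x)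
    have hC2 : C2 ∈ (GammaGraph n).neighborSet B := by
      refine ⟨?_, by simpa [C2, Finset.disjoint_singleton_right] using hy'⟩
      intro hEq
      have : B.1 = {y} := congrArg Subtype.val hEq
      exact hy' (this ▸ Finset.mem_singleton_self y)
    have := (Nat.card_eq_one_iff_unique.mp h).1
    have heq : (⟨C1, hC1⟩ : (GammaGraph n).neighborSet B) = ⟨C2, hC2⟩ :=
      this.allEq _ _
    have : C1 = C2 := congrArg Subtype.val heq
    have : ({x} : Finset (Fin n)) = {y} := congrArg Subtype.val this
    exact hxy (by simpa using this)
  · intro hcard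
    have hcompl : B.1ᶜ.card = 1 := by
      rw [Finset.card_compl, Fintype.card_fin]
      omega
    have hcne : B.1ᶜ.Nonempty := Finset.card_pos.mp (by omega)
    have hcuniv : B.1ᶜ ≠ Finset.univ := by
      intro h
      have := congrArg Finset.card h
      rw [hcompl, Finset.card_univ, Fintype.card_fin] at this
      omega
    let C0 : GammaVert n := ⟨B.1ᶜ, hcne, hcuniv⟩
    have hset : (GammaGraph n).neighborSet B = {C0} := by
      ext C
      simp only [SimpleGraph.mem_neighborSet, Set.mem_singleton_iff]
      constructor
      · rintro ⟨hne, hdisj⟩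
        have hsub : C.1 ⊆ B.1ᶜ := fun z hz =>
          Finset.mem_compl.mpr (Finset.disjoint_right.mp hdisj hz)
        have : C.1 = B.1ᶜ := Finset.eq_of_subset_of_card_le hsub
          (by rw [hcompl]; exact Finset.card_pos.mpr C.2.1)
        exact Subtype.ext this
      · rintro rfl
        refine ⟨?_, disjoint_compl_right⟩
        intro hEq
        have : B.1 = B.1ᶜ := congrArg Subtype.val hEq
        have := congrArg Finset.card this
        rw [hcard, hcompl] at this
        omega
    rw [hset]
    simp
  
/-- For n ≥ 3, the end vertices (vertices of degree 1) of Γₙ are exactly the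
subsets of cardinality n − 1, and there are exactly n of them. -/
theorem gammaGraph_end_vertices (n : ℕ) (hn : 3 ≤ n) :
    (∀ B : GammaVert n,
      Nat.card ((GammaGraph n).neighborSet B) = 1 ↔ B.1.card = n - 1) ∧
    Nat.card {B : GammaVert n // Nat.card ((GammaGraph n).neighborSet B) = 1} = n := by
  refine ⟨gamma_iff n hn, ?_⟩
  have e : {B : GammaVert n // Nat.card ((GammaGraph n).neighborSet B) = 1} ≃
      {S : Finset (Fin n) // S.card = n - 1} :=
    { toFun := fun B => ⟨B.1.1, (gamma_iff n hn B.1).mp B.2⟩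
      invFun := fun S => ⟨⟨S.1,
          Finset.card_pos.mp (by omega),
          fun h => by
            have := congrArg Finset.card h
            rw [S.2, Finset.card_univ, Fintype.card_fin] at this
            omega⟩,
        (gamma_iff n hn _).mpr S.2⟩
      left_inv := fun B => by ext : 3; rfl
      right_inv := fun S => rfl }
  rw [Nat.card_congr e, Nat.card_eq_fintype_card, Fintype.card_finset_len,
    Fintype.card_fin]
  have : n - 1 ≤ n := by omega
  calc n.choose (n - 1) = n.choose (n - (n-1)) := (Nat.choose_symm this).symm
    _ = n.choose 1 := by congr 1; omega
    _ = n := Nat.choose_one_right n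
end

section
/- For every n ≥ 3, the automorphism group of the graph Γ_n is isomorphic, as a group, to the symmetric group on n letters; explicitly, every graph automorphism of Γ_n is induced by a unique permutation σ of {1,…,n} acting on vertices by B ↦ σ(B). -/
namespace Gamma

variable {n : ℕ}

/-- the singleton vertex -/
def sv (hn : 3 ≤ n) (i : Fin n) : GammaVert n :=
  ⟨{i}, Finset.singleton_nonempty i, by
    intro h
    have := congrArg Finset.card h
    simp [Finset.card_fin] at this
    omega⟩

lemma adj_sv (hn : 3 ≤ n) (i : Fin n) (B : GammaVert n) :
    (GammaGraph n).Adj (sv hn i) B ↔ i ∉ B.1 := by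
  constructor
  · rintro ⟨-, hd⟩
    simpa [sv, Finset.disjoint_singleton_left] using hd
  · intro h
    refine ⟨?_, by simpa [sv, Finset.disjoint_singleton_left] using h⟩
    intro he
    apply h
    rw [← he]
    simp [sv]

/-- graph-theoretic characterization target -/
def P (B : GammaVert n) : Prop :=
  ∀ C : GammaVert n, (∀ D, (GammaGraph n).Adj B D → (GammaGraph n).Adj C D) → C = B

lemma P_iff (hn : 3 ≤ n) (B : GammaVert n) : P B ↔ ∃ i, B.1 = {i} := by
  constructor
  · intro hP
    obtain ⟨i, hi⟩ := B.2.1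
    by_contra hne
    push_neg at hne
    have hCB : sv hn i ≠ B := by
      intro h
      exact hne i (by rw [← h]; rfl)
    have := hP (sv hn i) (fun D hD => by
      rw [adj_sv]
      intro hiD
      exact (Finset.disjoint_left.mp hD.2 hi) hiD)
    exact hCB this
  · rintro ⟨i, hi⟩ C hC
    have hcompl_ne : ({i}ᶜ : Finset (Fin n)).Nonempty := by
      have : ({i}ᶜ : Finset (Fin n)).card = n - 1 := by
        simp [Finset.card_compl]
      rw [← Finset.card_pos, this]; omega
    have hcompl_proper : ({i}ᶜ : Finset (Fin n)) ≠ Finset.univ := by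
      intro h
      have : i ∈ ({i}ᶜ : Finset (Fin n)) := h ▸ Finset.mem_univ i
      simp at this
    set D : GammaVert n := ⟨{i}ᶜ, hcompl_ne, hcompl_proper⟩ with hD
    have hBD : (GammaGraph n).Adj B D := by
      constructor
      · intro h
        have : B.1 = {i}ᶜ := congrArg Subtype.val h
        rw [hi] at this
        have : i ∈ ({i}ᶜ : Finset (Fin n)) := this ▸ Finset.mem_singleton_self i
        simp at this
      · rw [hi]; simp [hD]
    have hCD := hC D hBD
    have hsub : C.1 ⊆ {i} := by
      intro x hx
      by_contra hxi
      exact (Finset.disjoint_left.mp hCD.2 hx) (by simpa [hD] using hxi)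
    have : C.1 = {i} := by
      obtain ⟨x, hx⟩ := C.2.1
      have hx1 := hsub hx
      simp at hx1
      subst hx1
      exact Finset.Subset.antisymm hsub (Finset.singleton_subset_iff.mpr hx)
    exact Subtype.ext (this.trans hi.symm)

lemma P_map (f : GammaGraph n ≃g GammaGraph n) (B : GammaVert n) (hB : P B) : P (f B) := by
  intro C hC
  have : f.symm C = B := by
    apply hB
    intro D hD
    have h1 : (GammaGraph n).Adj (f B) (f D) := f.map_adj_iff.mpr hD
    have h2 := hC (f D) h1
    have := f.symm.map_adj_iff.mpr h2
    simpa using this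
  calc C = f (f.symm C) := by simp
    _ = f B := by rw [this]

/-- the element such that f (sv i) = {sigma f i} -/
noncomputable def sig (hn : 3 ≤ n) (f : GammaGraph n ≃g GammaGraph n) (i : Fin n) : Fin n :=
  ((P_iff hn (f (sv hn i))).mp
    (P_map f _ ((P_iff hn _).mpr ⟨i, rfl⟩))).choose

lemma sig_spec (hn : 3 ≤ n) (f : GammaGraph n ≃g GammaGraph n) (i : Fin n) :
    (f (sv hn i)).1 = {sig hn f i} :=
  ((P_iff hn (f (sv hn i))).mp (P_map f _ ((P_iff hn _).mpr ⟨i, rfl⟩))).choose_spec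

lemma f_sv (hn : 3 ≤ n) (f : GammaGraph n ≃g GammaGraph n) (i : Fin n) :
    f (sv hn i) = sv hn (sig hn f i) :=
  Subtype.ext (sig_spec hn f i)

lemma mem_iff (hn : 3 ≤ n) (f : GammaGraph n ≃g GammaGraph n) (B : GammaVert n) (j : Fin n) :
    j ∈ B.1 ↔ sig hn f j ∈ (f B).1 := by
  have h1 : (GammaGraph n).Adj (sv hn j) B ↔ (GammaGraph n).Adj (sv hn (sig hn f j)) (f B) := by
    rw [← f_sv hn f j]
    exact (f.map_adj_iff).symm
  rw [adj_sv, adj_sv] at h1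
  exact not_iff_not.mp h1

lemma sig_symm (hn : 3 ≤ n) (f : GammaGraph n ≃g GammaGraph n) (i : Fin n) :
    sig hn f.symm (sig hn f i) = i := by
  have h1 : f.symm (sv hn (sig hn f i)) = sv hn i := by
    rw [← f_sv hn f i]; simp
  have h2 := f_sv hn f.symm (sig hn f i)
  rw [h1] at h2
  have := congrArg Subtype.val h2
  simp only [sv] at this
  exact (Finset.singleton_inj.mp this).symm

noncomputable def perm (hn : 3 ≤ n) (f : GammaGraph n ≃g GammaGraph n) : Equiv.Perm (Fin n) where
  toFun := sig hn f
  invFun := sig hn f.symm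
  left_inv := sig_symm hn f
  right_inv := by
    intro i
    have := sig_symm hn f.symm i
    simpa using this

lemma action (hn : 3 ≤ n) (f : GammaGraph n ≃g GammaGraph n) (B : GammaVert n) :
    (f B).1 = B.1.image (perm hn f) := by
  ext x
  simp only [Finset.mem_image]
  constructor
  · intro hx
    refine ⟨sig hn f.symm x, ?_, ?_⟩
    · rw [mem_iff hn f]
      have : sig hn f (sig hn f.symm x) = x := (perm hn f).right_inv x
      rwa [show (sig hn f (sig hn f.symm x)) = x from this]
    · exact (perm hn f).right_inv x
  · rintro ⟨j, hj, rfl⟩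
    exact (mem_iff hn f B j).mp hj

/-- the automorphism induced by a permutation -/
def mapAut (σ : Equiv.Perm (Fin n)) : GammaGraph n ≃g GammaGraph n where
  toFun B := ⟨B.1.image σ, B.2.1.image σ, by
    intro h
    apply B.2.2
    have hc := congrArg Finset.card h
    rw [Finset.card_image_of_injective _ σ.injective, Finset.card_univ] at hc
    exact Finset.eq_univ_of_card _ hc⟩
  invFun B := ⟨B.1.image σ.symm, B.2.1.image σ.symm, by
    intro h
    apply B.2.2
    have hc := congrArg Finset.card h
    rw [Finset.card_image_of_injective _ σ.symm.injective, Finset.card_univ] at hc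
    exact Finset.eq_univ_of_card _ hc⟩
  left_inv B := by
    apply Subtype.ext
    simp [Finset.image_image]
  right_inv B := by
    apply Subtype.ext
    simp [Finset.image_image]
  map_rel_iff' := by
    intro B C
    show (GammaGraph n).Adj (⟨B.1.image σ, _⟩ : GammaVert n) ⟨C.1.image σ, _⟩ ↔ (GammaGraph n).Adj B C
    constructor
    · rintro ⟨h1, h2⟩
      refine ⟨fun h => h1 (by rw [h]), ?_⟩
      rwa [Finset.disjoint_image σ.injective] at h2
    · rintro ⟨h1, h2⟩
      refine ⟨?_, (Finset.disjoint_image σ.injective).mpr h2⟩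
      intro h
      apply h1
      apply Subtype.ext
      have := congrArg Subtype.val h
      simp only at this
      have := Finset.image_injective σ.injective this
      exact this

end Gamma


/-- For n ≥ 3, the automorphism group of Γₙ is isomorphic as a group to the
symmetric group on n letters: there is a composition-compatible bijection F from
graph automorphisms of Γₙ to permutations of {1,…,n} such that every automorphism
f acts on vertices by B ↦ (F f)(B), and F f is the unique such permutation. -/
theorem gammaGraph_automorphism_group (n : ℕ) (hn : 3 ≤ n) :
    ∃ F : (GammaGraph n ≃g GammaGraph n) ≃ Equiv.Perm (Fin n),
      (∀ f g : GammaGraph n ≃g GammaGraph n, F (f.trans g) = F g * F f) ∧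
      (∀ f : GammaGraph n ≃g GammaGraph n, ∀ B : GammaVert n,
        (f B).1 = B.1.image (F f)) ∧
      (∀ f : GammaGraph n ≃g GammaGraph n, ∀ σ : Equiv.Perm (Fin n),
        (∀ B : GammaVert n, (f B).1 = B.1.image σ) → σ = F f) := by
  classical
  refine ⟨{ toFun := Gamma.perm hn
            invFun := Gamma.mapAut
            left_inv := ?_
            right_inv := ?_ }, ?_, ?_, ?_⟩
  · intro f
    apply RelIso.ext
    intro B
    apply Subtype.ext
    exact (Gamma.action hn f B).symm
  · intro σ
    apply Equiv.ext
    intro i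
    have h := Gamma.sig_spec hn (Gamma.mapAut σ) i
    have h2 : (Gamma.mapAut σ (Gamma.sv hn i)).1 = {σ i} := by
      show (Gamma.sv hn i).1.image σ = {σ i}
      simp [Gamma.sv]
    rw [h2] at h
    exact (Finset.singleton_inj.mp h).symm
  · intro f g
    apply Equiv.ext
    intro i
    show Gamma.sig hn (f.trans g) i = Gamma.sig hn g (Gamma.sig hn f i)
    have h1 := Gamma.sig_spec hn (f.trans g) i
    have h2 : ((f.trans g) (Gamma.sv hn i)) = g (f (Gamma.sv hn i)) := rfl
    rw [h2, Gamma.f_sv hn f i, Gamma.f_sv hn g] at h1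
    simp only [Gamma.sv] at h1
    exact (Finset.singleton_inj.mp h1).symm
  · intro f B
    exact Gamma.action hn f B
  · intro f σ hσ
    apply Equiv.ext
    intro i
    have h1 := hσ (Gamma.sv hn i)
    have h2 : (Gamma.sv hn i).1.image σ = {σ i} := by simp [Gamma.sv]
    rw [h2, Gamma.sig_spec hn f i] at h1
    exact (Finset.singleton_inj.mp h1).symm
end

section
/- For each k ∈ {0,1,2,3} there exists a commutative zero-divisor semigroup S whose zero-divisor graph Γ(S) is isomorphic to M_{3,k}. -/
/-- The graph M_{n,k} (for k ≤ n): the complete graph Kₙ on the vertices `inl i`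
together with k end vertices `inr j`, where `inr j` is attached to `inl j`. -/
def Mgraph (n k : ℕ) : SimpleGraph (Fin n ⊕ Fin k) :=
  SimpleGraph.fromRel (fun u v =>
    match u, v with
    | Sum.inl i, Sum.inl j => i ≠ j
    | Sum.inl i, Sum.inr j => (i : ℕ) = (j : ℕ)
    | _, _ => False)

/-! Auxiliary construction -/

namespace M3kAux

lemma l1 : ∀ i j : Fin 3, (({i} : Finset (Fin 3)) ∩ {j} = ∅) ↔ i ≠ j := by decide
lemma l2 : ∀ i j : Fin 3, (({i} : Finset (Fin 3)) ∩ {j}ᶜ = ∅) ↔ i = j := by decide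
lemma l3 : ∀ i j : Fin 3, (({i}ᶜ : Finset (Fin 3)) ∩ {j}ᶜ) ≠ ∅ := by decide
lemma l4 : ∀ i j : Fin 3, (({i}ᶜ : Finset (Fin 3)) ∩ {j}ᶜ).card ≤ 1 ∨ i = j := by decide
lemma l5 : ∀ A : Finset (Fin 3), A.card ≤ 2 → ∃ i, i ∉ A := by decide
lemma l6 : ∀ i j : Fin 3, ({i} : Finset (Fin 3)) ≠ {j}ᶜ := by decide
lemma l7 : ∀ i : Fin 3, (({i}ᶜ : Finset (Fin 3))).card = 2 := by decide

/-- The defining predicate for our semigroup: `A` is `∅`, a singleton, or the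
complement of a singleton `{i}` with `i < k`. -/
@[reducible]
def P (k : ℕ) (A : Finset (Fin 3)) : Prop :=
  A.card ≤ 1 ∨ ∃ i : Fin 3, (i : ℕ) < k ∧ A = {i}ᶜ

lemma P_card {k : ℕ} {A : Finset (Fin 3)} (h : P k A) : A.card ≤ 2 := by
  rcases h with h | ⟨i, _, rfl⟩
  · omega
  · rw [l7]

lemma P_inter {k : ℕ} {A B : Finset (Fin 3)} (hA : P k A) (hB : P k B) :
    P k (A ∩ B) := by
  rcases hA with hA | ⟨i, hi, rfl⟩
  · exact Or.inl (le_trans (Finset.card_le_card Finset.inter_subset_left) hA)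
  rcases hB with hB | ⟨j, hj, rfl⟩
  · exact Or.inl (le_trans (Finset.card_le_card Finset.inter_subset_right) hB)
  rcases l4 i j with h | rfl
  · exact Or.inl h
  · rw [Finset.inter_self]; exact Or.inr ⟨i, hi, rfl⟩

@[reducible]
def Sk (k : ℕ) : Type := {A : Finset (Fin 3) // P k A}

instance instSk (k : ℕ) : CommSemigroupWithZero (Sk k) where
  mul A B := ⟨A.1 ∩ B.1, P_inter A.2 B.2⟩
  mul_assoc A B C := Subtype.ext (Finset.inter_assoc _ _ _)
  mul_comm A B := Subtype.ext (Finset.inter_comm _ _)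
  zero := ⟨∅, Or.inl (by simp)⟩
  zero_mul A := Subtype.ext (Finset.empty_inter _)
  mul_zero A := Subtype.ext (Finset.inter_empty _)

lemma mul_def {k : ℕ} (A B : Sk k) : (A * B).1 = A.1 ∩ B.1 := rfl
lemma zero_def {k : ℕ} : (0 : Sk k).1 = ∅ := rfl

lemma eq_zero_iff {k : ℕ} (A : Sk k) : A = 0 ↔ A.1 = ∅ := Subtype.ext_iff

lemma zd (k : ℕ) : IsZeroDivisorSemigroup (Sk k) := by
  intro s
  obtain ⟨i, hi⟩ := l5 s.1 (P_card s.2)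
  refine ⟨⟨{i}, Or.inl (by simp)⟩, ?_, ?_⟩
  · intro h; rw [eq_zero_iff] at h; simp at h
  · rw [eq_zero_iff, mul_def]
    rw [Finset.inter_comm]; exact Finset.singleton_inter_of_notMem hi

end M3kAux

open M3kAux in
/-- **Theorem 2.3(1).** For each k ∈ {0,1,2,3} there is a commutative zero-divisor
semigroup whose zero-divisor graph is isomorphic to M_{3,k}. -/
theorem exists_semigroup_for_M3k (k : ℕ) (hk : k ≤ 3) :
    ∃ (S : Type) (inst : CommSemigroupWithZero S),
      @IsZeroDivisorSemigroup S inst ∧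
      Nonempty (@zdGraph S inst ≃g Mgraph 3 k) := by
  refine ⟨Sk k, instSk k, zd k, ⟨?_⟩⟩
  have hι : ∀ j : Fin k, ((⟨(j : ℕ), lt_of_lt_of_le j.2 hk⟩ : Fin 3) : ℕ) < k :=
    fun j => j.2
  set ι : Fin k → Fin 3 := fun j => ⟨(j : ℕ), lt_of_lt_of_le j.2 hk⟩ with hιdef
  set g : Fin 3 ⊕ Fin k → Sk k := fun v =>
    match v with
    | Sum.inl i => ⟨{i}, Or.inl (by simp)⟩
    | Sum.inr j => ⟨{ι j}ᶜ, Or.inr ⟨ι j, hι j, rfl⟩⟩ with hg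
  have hg1 : ∀ i : Fin 3, (g (Sum.inl i)).1 = {i} := fun _ => rfl
  have hg2 : ∀ j : Fin k, (g (Sum.inr j)).1 = ({ι j}ᶜ : Finset (Fin 3)) := fun _ => rfl
  have hgne : ∀ v, g v ≠ 0 := by
    rintro (i | j) h <;> rw [eq_zero_iff] at h
    · rw [hg1] at h; simp at h
    · rw [hg2 j] at h
      have h7 := l7 (ι j)
      rw [h] at h7
      simp at h7
  have hginj : Function.Injective g := by
    rintro (i | j) (i' | j') h <;> rw [Subtype.ext_iff] at h
    · rw [hg1, hg1] at h
      rw [Finset.singleton_injective h]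
    · rw [hg1, hg2] at h; exact absurd h (l6 i (ι j'))
    · rw [hg2, hg1] at h; exact absurd h.symm (l6 i' (ι j))
    · rw [hg2, hg2] at h
      have h2 : ι j = ι j' := by
        have := congrArg (fun A : Finset (Fin 3) => Aᶜ) h
        simpa using this
      have h3 : (j : ℕ) = (j' : ℕ) := congrArg Fin.val (α := Fin 3) h2
      exact congrArg Sum.inr (Fin.ext h3)
  set f : Fin 3 ⊕ Fin k → {s : Sk k // s ≠ 0 ∧ ∃ t : Sk k, t ≠ 0 ∧ s * t = 0} :=
    fun v => ⟨g v, hgne v, zd k (g v)⟩ with hf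
  have hfinj : Function.Injective f := fun a b h =>
    hginj (congrArg Subtype.val h)
  have hfsurj : Function.Surjective f := by
    rintro ⟨⟨A, hA⟩, hne, -⟩
    have hAne : A ≠ ∅ := fun h => hne (by rw [eq_zero_iff]; exact h)
    rcases hA with h | ⟨i, hik, rfl⟩
    · rcases Nat.le_one_iff_eq_zero_or_eq_one.mp h with h' | h'
      · exact absurd (Finset.card_eq_zero.mp h') hAne
      · obtain ⟨i, rfl⟩ := Finset.card_eq_one.mp h'
        exact ⟨Sum.inl i, Subtype.ext (Subtype.ext (hg1 i))⟩
    · refine ⟨Sum.inr ⟨(i : ℕ), hik⟩, Subtype.ext (Subtype.ext ?_)⟩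
      rw [hg2]
  refine SimpleGraph.Iso.symm (RelIso.mk (Equiv.ofBijective f ⟨hfinj, hfsurj⟩) ?_)
  intro a b
  show (f a ≠ f b ∧ (g a) * (g b) = 0) ↔ (Mgraph 3 k).Adj a b
  rw [hfinj.ne_iff, eq_zero_iff, mul_def]
  rw [Mgraph, SimpleGraph.fromRel_adj]
  rcases a with i | j <;> rcases b with i' | j'
  · rw [hg1, hg1]
    simp only [l1, ne_eq, Sum.inl.injEq]
    tauto
  · rw [hg1, hg2]
    simp only [l2, ne_eq]
    constructor
    · rintro ⟨-, h2⟩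
      exact ⟨by simp, Or.inl (congrArg Fin.val (α := Fin 3) h2)⟩
    · rintro ⟨-, h2 | h2⟩
      · exact ⟨by simp, Fin.ext h2⟩
      · exact h2.elim
  · rw [hg2, hg1, Finset.inter_comm, l2]
    constructor
    · rintro ⟨-, h2⟩
      exact ⟨by simp, Or.inr (congrArg Fin.val (α := Fin 3) h2)⟩
    · rintro ⟨-, h2 | h2⟩
      · exact h2.elim
      · exact ⟨by simp, Fin.ext (show ((i' : Fin 3) : ℕ) = ((j : Fin k) : ℕ) from h2)⟩
  · rw [hg2, hg2]
    constructor
    · rintro ⟨-, h2⟩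
      exact absurd h2 (l3 _ _)
    · rintro ⟨-, h2 | h2⟩ <;> exact h2.elim
end

section
/- Let n ≥ 4 and let G be a simple graph whose vertex set is the disjoint union of {a_1, …, a_n} and sets X_1, …, X_n, satisfying: (1) X_1, X_2, X_3, X_4 are nonempty; (2) each a_k (1 ≤ k ≤ n) is adjacent to a_3 or to a_4; (3) a_i is adjacent to a_j whenever i ≠ j and both X_i and X_j are nonempty; (4) for each j, a_j is adjacent to every vertex of X_j; (5) there is no edge between a vertex of X_i and a vertex of X_j for i ≠ j; (6) there is no edge between a_i and any vertex of X_j for i ≠ j; (7) the edges inside each X_i are arbitrary. Then there is no commutative zero-divisor semigroup S whose zero-divisor graph Γ(S) is isomorphic to G. -/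
/-- **Theorem 3.1.** For n ≥ 4, let G be a graph on the disjoint union of
{a₁,…,aₙ} and sets X₁,…,Xₙ such that: X₁,…,X₄ are nonempty; every aₖ is adjacent
to a₃ or a₄; aᵢ is adjacent to aⱼ whenever i ≠ j and Xᵢ, Xⱼ are nonempty; aⱼ is
adjacent to every vertex of Xⱼ; there are no edges between distinct Xᵢ and Xⱼ,
and none between aᵢ and Xⱼ for i ≠ j (edges inside each Xᵢ being arbitrary).
Then no commutative zero-divisor semigroup has zero-divisor graph isomorphic
to G. -/
theorem no_semigroup_for_Ln (n : ℕ) (hn : 4 ≤ n)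
    (V : Type*) (G : SimpleGraph V) (a : Fin n → V) (X : Fin n → Set V)
    (hainj : Function.Injective a)
    (haX : ∀ i j : Fin n, a i ∉ X j)
    (hXdisj : ∀ i j : Fin n, i ≠ j → Disjoint (X i) (X j))
    (hcover : ∀ v : V, (∃ i, v = a i) ∨ ∃ i, v ∈ X i)
    (h1 : ∀ i : Fin n, (i : ℕ) < 4 → (X i).Nonempty)
    (h2 : ∀ k : Fin n, G.Adj (a k) (a ⟨2, by omega⟩) ∨ G.Adj (a k) (a ⟨3, by omega⟩))
    (h3 : ∀ i j : Fin n, i ≠ j → (X i).Nonempty → (X j).Nonempty → G.Adj (a i) (a j))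
    (h4 : ∀ j : Fin n, ∀ v ∈ X j, G.Adj (a j) v)
    (h5 : ∀ i j : Fin n, i ≠ j → ∀ u ∈ X i, ∀ v ∈ X j, ¬ G.Adj u v)
    (h6 : ∀ i j : Fin n, i ≠ j → ∀ v ∈ X j, ¬ G.Adj (a i) v)
    (S : Type*) [CommSemigroupWithZero S] (hS : IsZeroDivisorSemigroup S) :
    ¬ Nonempty (zdGraph S ≃g G) := by
  rintro ⟨φ⟩
  set ψ := φ.symm with hψ
  set F : V → S := fun v => (ψ v : S) with hF
  have hFne : ∀ v : V, F v ≠ 0 := fun v => (ψ v).2.1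
  have hadj : ∀ v v' : V, G.Adj v v' ↔ (v ≠ v' ∧ F v * F v' = 0) := by
    intro v v'
    rw [← ψ.map_adj_iff]
    constructor
    · rintro ⟨hh1, hh2⟩
      exact ⟨fun h => hh1 (by rw [h]), hh2⟩
    · rintro ⟨hh1, hh2⟩
      exact ⟨fun h => hh1 (ψ.toEquiv.injective h), hh2⟩
  have hsurj : ∀ s : S, s ≠ 0 → ∃ v : V, F v = s := by
    intro s hs
    refine ⟨φ ⟨s, hs, hS s⟩, ?_⟩
    show ((φ.symm (φ ⟨s, hs, hS s⟩) : _) : S) = s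
    rw [φ.symm_apply_apply]
  -- indices
  have h0n : 0 < n := by omega
  have h1n : 1 < n := by omega
  have h2n : 2 < n := by omega
  have h3n : 3 < n := by omega
  set i0 : Fin n := ⟨0, h0n⟩ with hi0
  set i1 : Fin n := ⟨1, h1n⟩ with hi1
  set i2 : Fin n := ⟨2, h2n⟩ with hi2
  set i3 : Fin n := ⟨3, h3n⟩ with hi3
  have hne : ∀ (p q : ℕ) (hp : p < n) (hq : q < n), p ≠ q →
      (⟨p, hp⟩ : Fin n) ≠ ⟨q, hq⟩ := by
    intro p q hp hq hpq h
    exact hpq (congrArg Fin.val h)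
  -- elements
  obtain ⟨px, hpx⟩ := h1 i0 (by simp [hi0])
  obtain ⟨py, hpy⟩ := h1 i1 (by simp [hi1])
  obtain ⟨pz, hpz⟩ := h1 i2 (by simp [hi2])
  obtain ⟨pw, hpw⟩ := h1 i3 (by simp [hi3])
  have hAx : F (a i0) * F px = 0 := ((hadj _ _).mp (h4 i0 px hpx)).2
  have hBy : F (a i1) * F py = 0 := ((hadj _ _).mp (h4 i1 py hpy)).2
  have hCz : F (a i2) * F pz = 0 := ((hadj _ _).mp (h4 i2 pz hpz)).2
  have hDw : F (a i3) * F pw = 0 := ((hadj _ _).mp (h4 i3 pw hpw)).2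
  -- elements of different X's are different and non-adjacent, so product ≠ 0
  have hXprod : ∀ (i j : Fin n), i ≠ j → ∀ u ∈ X i, ∀ v ∈ X j, F u * F v ≠ 0 := by
    intro i j hij u hu v hv hprod
    have huv : u ≠ v := fun h => Set.disjoint_left.mp (hXdisj i j hij) hu (h ▸ hv)
    exact h5 i j hij u hu v hv ((hadj _ _).mpr ⟨huv, hprod⟩)
  -- classification: if F v kills an element of X j, then v = a j or v ∈ X j
  have classX : ∀ (v : V) (j : Fin n) (yv : V), yv ∈ X j → F v * F yv = 0 →
      v = a j ∨ v ∈ X j := by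
    intro v j yv hyv hprod
    rcases hcover v with ⟨i, rfl⟩ | ⟨i, hvXi⟩
    · by_cases hij : i = j
      · left; rw [hij]
      · exfalso
        refine h6 i j hij yv hyv ((hadj _ _).mpr ⟨?_, hprod⟩)
        intro h
        exact haX i j (h ▸ hyv)
    · by_cases hij : i = j
      · right; rw [← hij]; exact hvXi
      · exfalso
        have hvy : v ≠ yv := fun h =>
          Set.disjoint_left.mp (hXdisj i j hij) hvXi (h ▸ hyv)
        exact h5 i j hij v hvXi yv hyv ((hadj _ _).mpr ⟨hvy, hprod⟩)
  -- the element u = x*y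
  have hu_ne : F px * F py ≠ 0 := hXprod i0 i1 (hne 0 1 h0n h1n (by omega)) px hpx py hpy
  obtain ⟨vu, hvu⟩ := hsurj (F px * F py) hu_ne
  have hu0 : F vu * F (a i0) = 0 := by
    rw [hvu, mul_comm, ← mul_assoc, hAx, zero_mul]
  have hu1 : F vu * F (a i1) = 0 := by
    rw [hvu, mul_comm, mul_left_comm, hBy, mul_zero]
  -- vu is some a k
  have hva : ∀ (j : Fin n), F vu * F (a j) = 0 → (∃ i, vu ∈ X i) → vu ∈ X j := by
    intro j hprod ⟨i, hvXi⟩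
    by_cases hij : i = j
    · rw [← hij]; exact hvXi
    · exfalso
      refine h6 j i (fun h => hij h.symm) vu hvXi ((hadj _ _).mpr ⟨?_, ?_⟩)
      · intro h; exact haX j i (h ▸ hvXi)
      · rw [mul_comm]; exact hprod
  obtain ⟨k, hk⟩ : ∃ k, vu = a k := by
    rcases hcover vu with hcase | hcase
    · exact hcase
    · exfalso
      have m0 : vu ∈ X i0 := hva i0 hu0 hcase
      have m1 : vu ∈ X i1 := hva i1 hu1 hcase
      exact Set.disjoint_left.mp (hXdisj i0 i1 (hne 0 1 h0n h1n (by omega))) m0 m1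
  -- now use h2
  have key : F px * F py * F (a i2) = 0 ∨ F px * F py * F (a i3) = 0 := by
    rcases h2 k with hcd | hcd
    · left
      rw [← hvu, hk]
      exact ((hadj _ _).mp hcd).2
    · right
      rw [← hvu, hk]
      exact ((hadj _ _).mp hcd).2
  -- final contradiction, symmetric helper
  have final : ∀ (j : Fin n) (q : V), q ∈ X j → (j : ℕ) ≠ 0 → (j : ℕ) ≠ 1 →
      F (a j) * F q = 0 → F px * F py * F (a j) = 0 → False := by
    intro j q hq hj0 hj1 hjq hprod
    -- e = F (a j) * F px is nonzero, killed by py and by q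
    have hj0' : j ≠ i0 := fun h => hj0 (congrArg Fin.val h)
    have hj1' : j ≠ i1 := fun h => hj1 (congrArg Fin.val h)
    have he_ne : F (a j) * F px ≠ 0 := by
      intro h
      refine h6 j i0 hj0' px hpx ((hadj _ _).mpr ⟨?_, h⟩)
      intro hh; exact haX j i0 (hh ▸ hpx)
    obtain ⟨ve, hve⟩ := hsurj (F (a j) * F px) he_ne
    have hey : F ve * F py = 0 := by
      rw [hve, mul_rotate]
      exact hprod
    have heq : F ve * F q = 0 := by
      rw [hve, mul_comm (F (a j)) (F px), mul_assoc, hjq, mul_zero]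
    have c1 := classX ve i1 py hpy hey
    have c2 := classX ve j q hq heq
    rcases c1 with c1 | c1 <;> rcases c2 with c2 | c2
    · exact hj1' (hainj (c1.symm.trans c2)).symm
    · exact haX i1 j (c1 ▸ c2)
    · exact haX j i1 (c2 ▸ c1)
    · exact Set.disjoint_left.mp (hXdisj i1 j (fun h => hj1' h.symm)) c1 c2
  rcases key with hkey | hkey
  · exact final i2 pz hpz (by simp [hi2]) (by simp [hi2]) hCz hkey
  · exact final i3 pw hpw (by simp [hi3]) (by simp [hi3]) hDw hkey
end

section
/- Let m, n ≥ 2 and let G be a simple graph whose vertex set is the disjoint union of A = {a_1, …, a_m}, B = {b_1, …, b_n}, and nonempty sets X_1 and Y_1, satisfying: (1) a_1 and a_2 are adjacent to every b_k (1 ≤ k ≤ n), and b_1 and b_2 are adjacent to every a_r (1 ≤ r ≤ m); (2) a_1 is adjacent to every vertex of X_1 and b_1 is adjacent to every vertex of Y_1; (3) there is no edge between a vertex of X_1 and a vertex of Y_1; (4) there is no edge between any a_i and any vertex of Y_1, and no edge between any b_j and any vertex of X_1; (5) there is no edge between a_i and any vertex of X_1 for i ≠ 1, and no edge between b_j and any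 vertex of Y_1 for j ≠ 1; (6) there are no edges within A and no edges within B (the induced subgraph on A ∪ B is a subgraph of the complete bipartite graph K_{m,n}); (7) the edges inside X_1 and inside Y_1 are arbitrary. Then there is no commutative zero-divisor semigroup S whose zero-divisor graph Γ(S) is isomorphic to G. -/
/-- **Theorem 3.3.** For m, n ≥ 2, let G be a graph on the disjoint union of
A = {a₁,…,a_m}, B = {b₁,…,b_n} and nonempty sets X₁, Y₁ such that: a₁,a₂ are
adjacent to every bₖ and b₁,b₂ to every aᵣ; a₁ (resp. b₁) is adjacent to every
vertex of X₁ (resp. Y₁); there are no edges between X₁ and Y₁, none between any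
aᵢ and Y₁, none between any bⱼ and X₁, none between aᵢ (i ≠ 1) and X₁, none
between bⱼ (j ≠ 1) and Y₁, and none inside A or inside B (edges inside X₁ and Y₁
being arbitrary). Then no commutative zero-divisor semigroup has zero-divisor
graph isomorphic to G. -/
theorem no_semigroup_for_Hmn (m n : ℕ) (hm : 2 ≤ m) (hn : 2 ≤ n)
    (V : Type*) (G : SimpleGraph V)
    (a : Fin m → V) (b : Fin n → V) (X Y : Set V)
    (hainj : Function.Injective a) (hbinj : Function.Injective b)
    (hab : ∀ i j, a i ≠ b j)
    (haXY : ∀ i, a i ∉ X ∧ a i ∉ Y)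
    (hbXY : ∀ j, b j ∉ X ∧ b j ∉ Y)
    (hXY : Disjoint X Y)
    (hXne : X.Nonempty) (hYne : Y.Nonempty)
    (hcover : ∀ v : V, (∃ i, v = a i) ∨ (∃ j, v = b j) ∨ v ∈ X ∨ v ∈ Y)
    (h1a : ∀ k : Fin n, G.Adj (a ⟨0, by omega⟩) (b k) ∧ G.Adj (a ⟨1, by omega⟩) (b k))
    (h1b : ∀ r : Fin m, G.Adj (b ⟨0, by omega⟩) (a r) ∧ G.Adj (b ⟨1, by omega⟩) (a r))
    (h2a : ∀ v ∈ X, G.Adj (a ⟨0, by omega⟩) v)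
    (h2b : ∀ v ∈ Y, G.Adj (b ⟨0, by omega⟩) v)
    (h3 : ∀ u ∈ X, ∀ v ∈ Y, ¬ G.Adj u v)
    (h4a : ∀ i : Fin m, ∀ v ∈ Y, ¬ G.Adj (a i) v)
    (h4b : ∀ j : Fin n, ∀ v ∈ X, ¬ G.Adj (b j) v)
    (h5a : ∀ i : Fin m, (i : ℕ) ≠ 0 → ∀ v ∈ X, ¬ G.Adj (a i) v)
    (h5b : ∀ j : Fin n, (j : ℕ) ≠ 0 → ∀ v ∈ Y, ¬ G.Adj (b j) v)
    (h6a : ∀ i j : Fin m, ¬ G.Adj (a i) (a j))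
    (h6b : ∀ i j : Fin n, ¬ G.Adj (b i) (b j))
    (S : Type*) [CommSemigroupWithZero S] (hS : IsZeroDivisorSemigroup S) :
    ¬ Nonempty (zdGraph S ≃g G) := by
  rintro ⟨e⟩
  obtain ⟨x, hx⟩ := hXne
  obtain ⟨y, hy⟩ := hYne
  set f : V → S := fun v => ((e.symm v : {s : S // s ≠ 0 ∧ ∃ t : S, t ≠ 0 ∧ s * t = 0}) : S) with hfdef
  have hf0 : ∀ v, f v ≠ 0 := fun v => (e.symm v).2.1
  have hadj : ∀ u v : V, G.Adj u v ↔ (u ≠ v ∧ f u * f v = 0) := by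
    intro u v
    constructor
    · intro h
      have h' : (zdGraph S).Adj (e.symm u) (e.symm v) := e.symm.map_adj_iff.mpr h
      exact ⟨h.ne, h'.2⟩
    · rintro ⟨hne, hmul⟩
      have h' : (zdGraph S).Adj (e.symm u) (e.symm v) :=
        ⟨fun h => hne (e.symm.injective h), hmul⟩
      exact e.symm.map_adj_iff.mp h'
  have hsurj : ∀ s : S, s ≠ 0 → ∃ v, f v = s := by
    intro s hs
    refine ⟨e ⟨s, hs, hS s⟩, ?_⟩
    simp [hfdef]
  have hne0 : ∀ u v : V, u ≠ v → ¬ G.Adj u v → f u * f v ≠ 0 :=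
    fun u v h1 h2 h3 => h2 ((hadj u v).mpr ⟨h1, h3⟩)
  -- basic products
  have ha0x : f (a ⟨0, by omega⟩) * f x = 0 := ((hadj _ _).mp (h2a x hx)).2
  have hb0y : f (b ⟨0, by omega⟩) * f y = 0 := ((hadj _ _).mp (h2b y hy)).2
  have hxyV : x ≠ y := fun h => Set.disjoint_left.mp hXY hx (h ▸ hy)
  have hxy0 : f x * f y ≠ 0 := hne0 x y hxyV (h3 x hx y hy)
  -- characterization lemmas
  have cA : ∀ w : V, f (a ⟨0, by omega⟩) * f w = 0 →
      (∃ j, w = b j) ∨ w ∈ X ∨ w = a ⟨0, by omega⟩ := by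
    intro w hw
    rcases hcover w with ⟨i, rfl⟩ | ⟨j, rfl⟩ | hX' | hY'
    · by_cases hi : i = ⟨0, by omega⟩
      · right; right; rw [hi]
      · exact absurd ((hadj _ _).mpr ⟨fun h => hi (hainj h).symm, hw⟩) (h6a _ _)
    · exact Or.inl ⟨j, rfl⟩
    · exact Or.inr (Or.inl hX')
    · have hne : a ⟨0, by omega⟩ ≠ w := fun h => (haXY _).2 (h ▸ hY')
      exact absurd ((hadj _ _).mpr ⟨hne, hw⟩) (h4a _ w hY')
  have cB : ∀ w : V, f (b ⟨0, by omega⟩) * f w = 0 →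
      (∃ i, w = a i) ∨ w ∈ Y ∨ w = b ⟨0, by omega⟩ := by
    intro w hw
    rcases hcover w with ⟨i, rfl⟩ | ⟨j, rfl⟩ | hX' | hY'
    · exact Or.inl ⟨i, rfl⟩
    · by_cases hj : j = ⟨0, by omega⟩
      · right; right; rw [hj]
      · exact absurd ((hadj _ _).mpr ⟨fun h => hj (hbinj h).symm, hw⟩) (h6b _ _)
    · have hne : b ⟨0, by omega⟩ ≠ w := fun h => (hbXY _).1 (h ▸ hX')
      exact absurd ((hadj _ _).mpr ⟨hne, hw⟩) (h4b _ w hX')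
    · exact Or.inr (Or.inl hY')
  -- case 1 : f x * f y = f a₀ is impossible
  have case_a0 : f x * f y = f (a ⟨0, by omega⟩) → False := by
    intro hE
    have hb1y : f (b ⟨1, by omega⟩) * f y ≠ 0 :=
      hne0 _ _ (fun h => (hbXY _).2 (h ▸ hy)) (h5b ⟨1, by omega⟩ one_ne_zero y hy)
    obtain ⟨w', hw'⟩ := hsurj _ hb1y
    have hb1a0 : f (b ⟨1, by omega⟩) * f (a ⟨0, by omega⟩) = 0 :=
      ((hadj _ _).mp (h1b ⟨0, by omega⟩).2).2
    have h1 : f w' * f x = 0 := by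
      rw [hw', mul_assoc, mul_comm (f y) (f x), hE]
      exact hb1a0
    have h2 : f (b ⟨0, by omega⟩) * f w' = 0 := by
      rw [hw', mul_left_comm, hb0y, mul_zero]
    have hw'a0 : w' = a ⟨0, by omega⟩ := by
      rcases hcover w' with ⟨i, rfl⟩ | ⟨j, rfl⟩ | hX' | hY'
      · by_cases hi : (i : ℕ) = 0
        · congr 1; exact Fin.ext hi
        · have hne : a i ≠ x := fun h => (haXY i).1 (h ▸ hx)
          exact absurd ((hadj _ _).mpr ⟨hne, h1⟩) (h5a i hi x hx)
      · have hne : b j ≠ x := fun h => (hbXY j).1 (h ▸ hx)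
        exact absurd ((hadj _ _).mpr ⟨hne, h1⟩) (h4b j x hx)
      · rcases cB w' h2 with ⟨r, hr⟩ | hY'' | hb
        · exact absurd (hr ▸ hX') (haXY r).1
        · exact absurd hY'' (Set.disjoint_left.mp hXY hX')
        · exact absurd (hb ▸ hX') (hbXY _).1
      · have hne : w' ≠ x := fun h => Set.disjoint_left.mp hXY (by rw [← h] at hx; exact hx) hY'
        have : G.Adj w' x := (hadj _ _).mpr ⟨hne, h1⟩
        exact ((h3 x hx w' hY') this.symm).elim
    have hkey : f (b ⟨1, by omega⟩) * f y = f (a ⟨0, by omega⟩) := by rw [← hw', hw'a0]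
    have ha1b1 : f (a ⟨1, by omega⟩) * f (b ⟨1, by omega⟩) = 0 :=
      ((hadj _ _).mp (h1a ⟨1, by omega⟩).2).2
    have hfin : f (a ⟨1, by omega⟩) * f (a ⟨0, by omega⟩) = 0 := by
      rw [← hkey, ← mul_assoc, ha1b1, zero_mul]
    have hne : a (⟨1, by omega⟩ : Fin m) ≠ a ⟨0, by omega⟩ := by
      intro h
      have h' := hainj h
      simp [Fin.ext_iff] at h'
    exact hne0 _ _ hne (h6a _ _) hfin
  -- case 2 : f x * f y = f b₀ is impossible
  have case_b0 : f x * f y = f (b ⟨0, by omega⟩) → False := by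
    intro hE
    have ha1x : f (a ⟨1, by omega⟩) * f x ≠ 0 :=
      hne0 _ _ (fun h => (haXY _).1 (h ▸ hx)) (h5a ⟨1, by omega⟩ one_ne_zero x hx)
    obtain ⟨w', hw'⟩ := hsurj _ ha1x
    have ha1b0 : f (a ⟨1, by omega⟩) * f (b ⟨0, by omega⟩) = 0 :=
      ((hadj _ _).mp (h1a ⟨0, by omega⟩).2).2
    have h1 : f w' * f y = 0 := by
      rw [hw', mul_assoc, hE]
      exact ha1b0
    have h2 : f (a ⟨0, by omega⟩) * f w' = 0 := by
      rw [hw', mul_left_comm, ha0x, mul_zero]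
    have hw'b0 : w' = b ⟨0, by omega⟩ := by
      rcases hcover w' with ⟨i, rfl⟩ | ⟨j, rfl⟩ | hX' | hY'
      · have hne : a i ≠ y := fun h => (haXY i).2 (h ▸ hy)
        exact absurd ((hadj _ _).mpr ⟨hne, h1⟩) (h4a i y hy)
      · by_cases hj : (j : ℕ) = 0
        · congr 1; exact Fin.ext hj
        · have hne : b j ≠ y := fun h => (hbXY j).2 (h ▸ hy)
          exact absurd ((hadj _ _).mpr ⟨hne, h1⟩) (h5b j hj y hy)
      · have hne : w' ≠ y := fun h => Set.disjoint_left.mp hXY hX' (by rw [h]; exact hy)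
        have : G.Adj w' y := (hadj _ _).mpr ⟨hne, h1⟩
        exact ((h3 w' hX' y hy) this).elim
      · rcases cA w' h2 with ⟨j, hj⟩ | hX'' | ha
        · exact absurd (hj ▸ hY') (hbXY j).2
        · exact absurd hY' (Set.disjoint_left.mp hXY hX'')
        · exact absurd (ha ▸ hY') (haXY _).2
    have hkey : f (a ⟨1, by omega⟩) * f x = f (b ⟨0, by omega⟩) := by rw [← hw', hw'b0]
    have hb1a1 : f (b ⟨1, by omega⟩) * f (a ⟨1, by omega⟩) = 0 :=
      ((hadj _ _).mp (h1b ⟨1, by omega⟩).2).2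
    have hfin : f (b ⟨1, by omega⟩) * f (b ⟨0, by omega⟩) = 0 := by
      rw [← hkey, ← mul_assoc, hb1a1, zero_mul]
    have hne : b (⟨1, by omega⟩ : Fin n) ≠ b ⟨0, by omega⟩ := by
      intro h
      have h' := hbinj h
      simp [Fin.ext_iff] at h'
    exact hne0 _ _ hne (h6b _ _) hfin
  -- combine
  obtain ⟨w, hw⟩ := hsurj _ hxy0
  have hA : f (a ⟨0, by omega⟩) * f w = 0 := by
    rw [hw, ← mul_assoc, ha0x, zero_mul]
  have hB : f (b ⟨0, by omega⟩) * f w = 0 := by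
    rw [hw, mul_left_comm, hb0y, mul_zero]
  rcases cA w hA with ⟨j, rfl⟩ | hX' | rfl
  · rcases cB (b j) hB with ⟨r, hr⟩ | hY' | hb
    · exact hab r j hr.symm
    · exact (hbXY j).2 hY'
    · exact case_b0 (by rw [← hw, hb])
  · rcases cB w hB with ⟨r, hr⟩ | hY' | hb
    · exact (haXY r).1 (hr ▸ hX')
    · exact Set.disjoint_left.mp hXY hX' hY'
    · exact case_b0 (by rw [← hw, hb])
  · exact case_a0 hw.symm
end

section
/- Let m, n ≥ 2 and let L be a simple graph obtained from the complete bipartite graph K_{m,n} by attaching k ≥ 2 end vertices to k distinct vertices of K_{m,n} (i.e., L consists of parts A = {a_1,…,a_m} and B = {b_1,…,b_n} with every a_i adjacent to every b_j and no other edges among A ∪ B, together with k ≥ 2 new vertices each adjacent to exactly one vertex of A ∪ B, no two of them adjacent to the same vertex). Then there is no commutative zero-divisor semigroup S whose zero-divisor graph Γ(S) is isomorphic to L. -/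
/-- **Corollary 3.4.** For m, n ≥ 2, let L be the complete bipartite graph K_{m,n}
(parts A = {a₁,…,a_m}, B = {b₁,…,b_n}) together with k ≥ 2 end vertices x₁,…,x_k,
each attached to exactly one vertex c i of A ∪ B, no two attached to the same
vertex. Then no commutative zero-divisor semigroup has zero-divisor graph
isomorphic to L. -/
theorem no_semigroup_for_Lmn (m n k : ℕ) (hm : 2 ≤ m) (hn : 2 ≤ n) (hk : 2 ≤ k)
    (V : Type*) (L : SimpleGraph V)
    (a : Fin m → V) (b : Fin n → V) (x : Fin k → V) (c : Fin k → V)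
    (hainj : Function.Injective a) (hbinj : Function.Injective b)
    (hxinj : Function.Injective x)
    (hab : ∀ i j, a i ≠ b j) (hax : ∀ i j, a i ≠ x j) (hbx : ∀ i j, b i ≠ x j)
    (hcinj : Function.Injective c)
    (hc : ∀ i, (∃ r, c i = a r) ∨ (∃ s, c i = b s))
    (hcover : ∀ v : V, (∃ i, v = a i) ∨ (∃ j, v = b j) ∨ (∃ i, v = x i))
    (hadj : ∀ u v : V, L.Adj u v ↔
      ((∃ i j, (u = a i ∧ v = b j) ∨ (u = b j ∧ v = a i)) ∨
       (∃ i, (u = x i ∧ v = c i) ∨ (u = c i ∧ v = x i))))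
    (S : Type*) [CommSemigroupWithZero S] (hS : IsZeroDivisorSemigroup S) :
    ¬ Nonempty (zdGraph S ≃g L) := by
  rintro ⟨e⟩
  set f : V → S := fun v => (e.symm v).1 with hf
  have hf0 : ∀ v, f v ≠ 0 := fun v => (e.symm v).2.1
  have hsurj : ∀ s : S, s ≠ 0 → ∃ v, f v = s := by
    intro s hs
    refine ⟨e ⟨s, hs, hS s⟩, ?_⟩
    show (e.symm (e ⟨s, hs, hS s⟩)).1 = s
    rw [e.symm_apply_apply]
  have hadj2 : ∀ u v : V, u ≠ v → (f u * f v = 0 ↔ L.Adj u v) := by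
    intro u v huv
    rw [← e.symm.map_rel_iff]
    constructor
    · intro h
      exact (⟨fun hh => huv (e.symm.injective hh), h⟩ : e.symm u ≠ e.symm v ∧ ((e.symm u : S) * e.symm v = 0))
    · intro h
      exact (h : e.symm u ≠ e.symm v ∧ ((e.symm u : S) * e.symm v = 0)).2
  -- basic adjacency facts
  have hAB0 : ∀ i j, f (a i) * f (b j) = 0 := by
    intro i j
    exact (hadj2 _ _ (hab i j)).mpr ((hadj _ _).2 (Or.inl ⟨i, j, Or.inl ⟨rfl, rfl⟩⟩))
  have hXC0 : ∀ l, f (x l) * f (c l) = 0 := by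
    intro l
    have hne : x l ≠ c l := by
      rcases hc l with ⟨r, hr⟩ | ⟨s, hs⟩
      · rw [hr]; exact fun h => hax r l h.symm
      · rw [hs]; exact fun h => hbx s l h.symm
    exact (hadj2 _ _ hne).mpr ((hadj _ _).2 (Or.inr ⟨l, Or.inl ⟨rfl, rfl⟩⟩))
  have adjX : ∀ (l : Fin k) (v : V), L.Adj v (x l) → v = c l := by
    intro l v h
    rcases (hadj _ _).1 h with ⟨i, j, ⟨hv, hx'⟩ | ⟨hv, hx'⟩⟩ | ⟨l', ⟨hv, hx'⟩ | ⟨hv, hx'⟩⟩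
    · exact absurd hx'.symm (hbx j l)
    · exact absurd hx'.symm (hax i l)
    · rcases hc l' with ⟨r, hr⟩ | ⟨s, hs⟩
      · exact absurd (hx'.trans hr).symm (hax r l)
      · exact absurd (hx'.trans hs).symm (hbx s l)
    · rw [hv]; exact congrArg c (hxinj hx').symm
  have notAA0 : ∀ i i', i ≠ i' → f (a i) * f (a i') ≠ 0 := by
    intro i i' hii h
    have hne : (a i : V) ≠ a i' := fun hh => hii (hainj hh)
    rcases (hadj _ _).1 ((hadj2 _ _ hne).mp h) with
      ⟨i0, j0, ⟨hv, hx'⟩ | ⟨hv, hx'⟩⟩ | ⟨l', ⟨hv, hx'⟩ | ⟨hv, hx'⟩⟩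
    · exact absurd hx' (hab i' j0)
    · exact absurd hv (hab i j0)
    · exact absurd hv (hax i l')
    · exact absurd hx' (hax i' l')
  have notBB0 : ∀ j j', j ≠ j' → f (b j) * f (b j') ≠ 0 := by
    intro j j' hjj h
    have hne : (b j : V) ≠ b j' := fun hh => hjj (hbinj hh)
    rcases (hadj _ _).1 ((hadj2 _ _ hne).mp h) with
      ⟨i0, j0, ⟨hv, hx'⟩ | ⟨hv, hx'⟩⟩ | ⟨l', ⟨hv, hx'⟩ | ⟨hv, hx'⟩⟩
    · exact absurd hv.symm (hab i0 j)
    · exact absurd hx'.symm (hab i0 j')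
    · exact absurd hv (hbx j l')
    · exact absurd hx' (hbx j' l')
  have zeroX : ∀ (l : Fin k) (v : V), v ≠ x l → f v * f (x l) = 0 → v = c l := by
    intro l v hne h
    exact adjX l v ((hadj2 _ _ hne).mp h)
  have nonadjX0 : ∀ (l : Fin k) (v : V), v ≠ x l → v ≠ c l → f (x l) * f v ≠ 0 := by
    intro l v h1 h2 h
    exact h2 (zeroX l v h1 (by rwa [mul_comm]))
  -- classification lemmas
  have K_A : ∀ z : S, z ≠ 0 → ∀ j₁ j₂ : Fin n, j₁ ≠ j₂ →
      z * f (b j₁) = 0 → z * f (b j₂) = 0 → ∃ i, z = f (a i) := by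
    intro z hz j₁ j₂ hj h1 h2
    obtain ⟨v, rfl⟩ := hsurj z hz
    rcases hcover v with ⟨i, hv⟩ | ⟨j, hv⟩ | ⟨l, hv⟩
    · exact ⟨i, by rw [hv]⟩
    · subst hv
      by_cases hjj : j = j₁
      · subst hjj
        exact absurd h2 (notBB0 j j₂ hj)
      · exact absurd h1 (notBB0 j j₁ hjj)
    · subst hv
      have e1 := zeroX l (b j₁) (hbx j₁ l) (by rw [mul_comm]; exact h1)
      have e2 := zeroX l (b j₂) (hbx j₂ l) (by rw [mul_comm]; exact h2)
      exact absurd (hbinj (e1.trans e2.symm)) hj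
  have K_B : ∀ z : S, z ≠ 0 → ∀ i₁ i₂ : Fin m, i₁ ≠ i₂ →
      z * f (a i₁) = 0 → z * f (a i₂) = 0 → ∃ j, z = f (b j) := by
    intro z hz p q hpq h1 h2
    obtain ⟨v, rfl⟩ := hsurj z hz
    rcases hcover v with ⟨i, hv⟩ | ⟨j, hv⟩ | ⟨l, hv⟩
    · subst hv
      by_cases hip : i = p
      · subst hip
        exact absurd h2 (notAA0 i q hpq)
      · exact absurd h1 (notAA0 i p hip)
    · exact ⟨j, by rw [hv]⟩
    · subst hv
      have e1 := zeroX l (a p) (hax p l) (by rw [mul_comm]; exact h1)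
      have e2 := zeroX l (a q) (hax q l) (by rw [mul_comm]; exact h2)
      exact absurd (hainj (e1.trans e2.symm)) hpq
  -- distinct indices
  obtain ⟨i₁, i₂, hi12⟩ : ∃ p q : Fin k, p ≠ q :=
    ⟨⟨0, by omega⟩, ⟨1, by omega⟩, by simp [Fin.ext_iff]⟩
  obtain ⟨jA, jB, hjAB⟩ : ∃ p q : Fin n, p ≠ q :=
    ⟨⟨0, by omega⟩, ⟨1, by omega⟩, by simp [Fin.ext_iff]⟩
  obtain ⟨iA, iB, hiAB⟩ : ∃ p q : Fin m, p ≠ q :=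
    ⟨⟨0, by omega⟩, ⟨1, by omega⟩, by simp [Fin.ext_iff]⟩
  -- mixed case
  have mixed : ∀ (l₁ l₂ : Fin k) (r : Fin m) (s : Fin n), l₁ ≠ l₂ →
      c l₁ = a r → c l₂ = b s → False := by
    intro l₁ l₂ r s hl h1 h2
    have hx12 : (x l₂ : V) ≠ x l₁ := fun h => hl (hxinj h.symm)
    have hp0 : f (x l₁) * f (x l₂) ≠ 0 :=
      nonadjX0 l₁ (x l₂) hx12 (by rw [h1]; exact fun h => hax r l₂ h.symm)
    have hpa : (f (x l₁) * f (x l₂)) * f (a r) = 0 := by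
      have h0 := hXC0 l₁; rw [h1] at h0
      calc f (x l₁) * f (x l₂) * f (a r)
          = f (x l₁) * f (a r) * f (x l₂) := mul_right_comm _ _ _
        _ = 0 := by rw [h0, zero_mul]
    have hpb : (f (x l₁) * f (x l₂)) * f (b s) = 0 := by
      have h0 := hXC0 l₂; rw [h2] at h0
      rw [mul_assoc, h0, mul_zero]
    obtain ⟨v, hv⟩ := hsurj _ hp0
    rcases hcover v with ⟨i, hvv⟩ | ⟨j, hvv⟩ | ⟨l, hvv⟩
    · subst hvv
      rw [← hv] at hpa hpb
      have hir : i = r := by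
        by_contra hne
        exact notAA0 i r hne hpa
      rw [hir] at hv
      obtain ⟨j0, hj0⟩ :=
        Fintype.exists_ne_of_one_lt_card (by rw [Fintype.card_fin]; omega) s
      have hu0 : f (x l₂) * f (b j0) ≠ 0 :=
        nonadjX0 l₂ (b j0) (hbx j0 l₂) (by rw [h2]; exact fun h => hj0 (hbinj h))
      have huA : ∀ i', (f (x l₂) * f (b j0)) * f (a i') = 0 := by
        intro i'
        rw [mul_assoc, mul_comm (f (b j0)), hAB0 i' j0, mul_zero]
      obtain ⟨j', hj'⟩ := K_B _ hu0 iA iB hiAB (huA iA) (huA iB)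
      have hux : (f (x l₂) * f (b j0)) * f (x l₁) = 0 := by
        calc (f (x l₂) * f (b j0)) * f (x l₁)
            = (f (x l₂) * f (x l₁)) * f (b j0) := mul_right_comm _ _ _
          _ = (f (x l₁) * f (x l₂)) * f (b j0) := by
              rw [mul_comm (f (x l₂)) (f (x l₁))]
          _ = f (a r) * f (b j0) := by rw [← hv]
          _ = 0 := hAB0 r j0
      rw [hj'] at hux
      have hcl := zeroX l₁ (b j') (hbx j' l₁) hux
      rw [h1] at hcl
      exact hab r j' hcl.symm
    · subst hvv
      rw [← hv] at hpa hpb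
      have hjs : j = s := by
        by_contra hne
        exact notBB0 j s hne hpb
      rw [hjs] at hv
      obtain ⟨i0, hi0⟩ :=
        Fintype.exists_ne_of_one_lt_card (by rw [Fintype.card_fin]; omega) r
      have hu0 : f (x l₁) * f (a i0) ≠ 0 :=
        nonadjX0 l₁ (a i0) (hax i0 l₁) (by rw [h1]; exact fun h => hi0 (hainj h))
      have huB : ∀ j', (f (x l₁) * f (a i0)) * f (b j') = 0 := by
        intro j'
        rw [mul_assoc, hAB0 i0 j', mul_zero]
      obtain ⟨i', hi'⟩ := K_A _ hu0 jA jB hjAB (huB jA) (huB jB)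
      have hux : (f (x l₁) * f (a i0)) * f (x l₂) = 0 := by
        calc (f (x l₁) * f (a i0)) * f (x l₂)
            = (f (x l₁) * f (x l₂)) * f (a i0) := mul_right_comm _ _ _
          _ = f (b s) * f (a i0) := by rw [← hv]
          _ = 0 := by rw [mul_comm]; exact hAB0 i0 s
      rw [hi'] at hux
      have hcl := zeroX l₂ (a i') (hax i' l₂) hux
      rw [h2] at hcl
      exact hab i' s hcl
    · subst hvv
      rw [← hv] at hpa hpb
      have e1 := zeroX l (a r) (hax r l) (by rw [mul_comm]; exact hpa)
      have e2 := zeroX l (b s) (hbx s l) (by rw [mul_comm]; exact hpb)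
      exact hab r s (e1.trans e2.symm)
  -- same part A
  have sameA : ∀ (l₁ l₂ : Fin k) (r t : Fin m), l₁ ≠ l₂ →
      c l₁ = a r → c l₂ = a t → False := by
    intro l₁ l₂ r t hl h1 h2
    have hrt : r ≠ t := fun h => hl (hcinj (by rw [h1, h2, h]))
    have hw0 : f (x l₂) * f (a r) ≠ 0 :=
      nonadjX0 l₂ (a r) (hax r l₂) (by rw [h2]; exact fun h => hrt (hainj h))
    have hwB : ∀ j, (f (x l₂) * f (a r)) * f (b j) = 0 := fun j => by
      rw [mul_assoc, hAB0 r j, mul_zero]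
    obtain ⟨u, hu⟩ := K_A _ hw0 jA jB hjAB (hwB jA) (hwB jB)
    have hwt : (f (x l₂) * f (a r)) * f (a t) = 0 := by
      have h0 := hXC0 l₂; rw [h2] at h0
      calc (f (x l₂) * f (a r)) * f (a t)
          = (f (x l₂) * f (a t)) * f (a r) := mul_right_comm _ _ _
        _ = 0 := by rw [h0, zero_mul]
    have hut : u = t := by
      by_contra hne
      rw [hu] at hwt
      exact notAA0 u t hne hwt
    rw [hut] at hu
    have hw'0 : f (x l₁) * f (a t) ≠ 0 :=
      nonadjX0 l₁ (a t) (hax t l₁) (by rw [h1]; exact fun h => hrt (hainj h.symm))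
    have hw'B : ∀ j, (f (x l₁) * f (a t)) * f (b j) = 0 := fun j => by
      rw [mul_assoc, hAB0 t j, mul_zero]
    obtain ⟨u', hu'⟩ := K_A _ hw'0 jA jB hjAB (hw'B jA) (hw'B jB)
    have hw'r : (f (x l₁) * f (a t)) * f (a r) = 0 := by
      have h0 := hXC0 l₁; rw [h1] at h0
      calc (f (x l₁) * f (a t)) * f (a r)
          = (f (x l₁) * f (a r)) * f (a t) := mul_right_comm _ _ _
        _ = 0 := by rw [h0, zero_mul]
    have hur : u' = r := by
      by_contra hne
      rw [hu'] at hw'r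
      exact notAA0 u' r hne hw'r
    rw [hur] at hu'
    rw [hu'] at hw'r
    have hfinal : f (a r) * f (a t) = 0 := by
      rw [← hu, mul_comm (f (x l₂)) (f (a r)), ← mul_assoc, hw'r, zero_mul]
    exact notAA0 r t hrt hfinal
  -- same part B
  have sameB : ∀ (l₁ l₂ : Fin k) (r t : Fin n), l₁ ≠ l₂ →
      c l₁ = b r → c l₂ = b t → False := by
    intro l₁ l₂ r t hl h1 h2
    have hrt : r ≠ t := fun h => hl (hcinj (by rw [h1, h2, h]))
    have hw0 : f (x l₂) * f (b r) ≠ 0 :=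
      nonadjX0 l₂ (b r) (hbx r l₂) (by rw [h2]; exact fun h => hrt (hbinj h))
    have hwA : ∀ i, (f (x l₂) * f (b r)) * f (a i) = 0 := fun i => by
      rw [mul_assoc, mul_comm (f (b r)), hAB0 i r, mul_zero]
    obtain ⟨u, hu⟩ := K_B _ hw0 iA iB hiAB (hwA iA) (hwA iB)
    have hwt : (f (x l₂) * f (b r)) * f (b t) = 0 := by
      have h0 := hXC0 l₂; rw [h2] at h0
      calc (f (x l₂) * f (b r)) * f (b t)
          = (f (x l₂) * f (b t)) * f (b r) := mul_right_comm _ _ _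
        _ = 0 := by rw [h0, zero_mul]
    have hut : u = t := by
      by_contra hne
      rw [hu] at hwt
      exact notBB0 u t hne hwt
    rw [hut] at hu
    have hw'0 : f (x l₁) * f (b t) ≠ 0 :=
      nonadjX0 l₁ (b t) (hbx t l₁) (by rw [h1]; exact fun h => hrt (hbinj h.symm))
    have hw'A : ∀ i, (f (x l₁) * f (b t)) * f (a i) = 0 := fun i => by
      rw [mul_assoc, mul_comm (f (b t)), hAB0 i t, mul_zero]
    obtain ⟨u', hu'⟩ := K_B _ hw'0 iA iB hiAB (hw'A iA) (hw'A iB)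
    have hw'r : (f (x l₁) * f (b t)) * f (b r) = 0 := by
      have h0 := hXC0 l₁; rw [h1] at h0
      calc (f (x l₁) * f (b t)) * f (b r)
          = (f (x l₁) * f (b r)) * f (b t) := mul_right_comm _ _ _
        _ = 0 := by rw [h0, zero_mul]
    have hur : u' = r := by
      by_contra hne
      rw [hu'] at hw'r
      exact notBB0 u' r hne hw'r
    rw [hur] at hu'
    rw [hu'] at hw'r
    have hfinal : f (b r) * f (b t) = 0 := by
      rw [← hu, mul_comm (f (x l₂)) (f (b r)), ← mul_assoc, hw'r, zero_mul]
    exact notBB0 r t hrt hfinal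
  -- dispatch
  rcases hc i₁ with ⟨r1, h1⟩ | ⟨s1, h1⟩
  · rcases hc i₂ with ⟨r2, h2⟩ | ⟨s2, h2⟩
    · exact sameA i₁ i₂ r1 r2 hi12 h1 h2
    · exact mixed i₁ i₂ r1 s2 hi12 h1 h2
  · rcases hc i₂ with ⟨r2, h2⟩ | ⟨s2, h2⟩
    · exact mixed i₂ i₁ r2 s1 hi12.symm h2 h1
    · exact sameB i₁ i₂ s1 s2 hi12 h1 h2
end
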